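/- arXiv:1704.02909 — 2 statements merged into one kernel-verified Lean document; each statement's English description precedes it below -/
import Mathlib

section
/- There exists a constant C_Γ > 0, depending only on the Schottky data, such that for every τ ∈ (0,1]: C_Γ^{-1} τ^{-δ} ≤ #(Z(τ)) ≤ C_Γ τ^{-δ}. -/
open MeasureTheory Set Real Pointwise

noncomputable section

abbrev SL2 := Matrix.SpecialLinearGroup (Fin 2) ℝ

/-- The Möbius transformation of `ℝ` associated to `g ∈ SL(2,ℝ)` (junk value at the pole). -/
def mobius (g : SL2) (x : ℝ) : ℝ :=
  (g 0 0 * x + g 0 1) / (g 1 0 * x + g 1 1)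

/-- The derivative `γ'(x) = (cx+d)⁻²` of the Möbius transformation. -/
def mobiusDeriv (g : SL2) (x : ℝ) : ℝ :=
  ((g 1 0 * x + g 1 1) ^ 2)⁻¹

/-- The derivative of the Möbius transformation in the ball model,
`|γ'(x)|_B = ((1+x²)/(1+γ(x)²)) γ'(x)`. -/
def mobiusDerivB (g : SL2) (x : ℝ) : ℝ :=
  ((1 + x ^ 2) / (1 + mobius g x ^ 2)) * mobiusDeriv g x

/-- The Möbius action of `SL(2,ℝ)` on `ℝ ∪ {∞}`. -/
def mobiusOP (g : SL2) (x : OnePoint ℝ) : OnePoint ℝ :=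
  Option.elim x
    (if g 1 0 = 0 then OnePoint.infty else ((g 0 0 / g 1 0 : ℝ) : OnePoint ℝ))
    (fun y => if g 1 0 * y + g 1 1 = 0 then OnePoint.infty
      else ((mobius g y : ℝ) : OnePoint ℝ))

/-- The pole `γ⁻¹(∞) = -d/c` of `γ = [[a,b],[c,d]]`. -/
def mobiusPole (g : SL2) : ℝ := -(g 1 1) / (g 1 0)

/-- The distortion factor `α(γ, [x₀,x₁]) = log((γ⁻¹(∞) − x₁)/(γ⁻¹(∞) − x₀))`,
with the convention `α = 0` when `γ⁻¹(∞) = ∞` (i.e. `c = 0`). -/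
def alphaDist (g : SL2) (x₀ x₁ : ℝ) : ℝ :=
  if g 1 0 = 0 then 0 else Real.log ((mobiusPole g - x₁) / (mobiusPole g - x₀))

/-- The letter `ā` paired with `a` in the alphabet `{1,…,2r}` (modelled by `Fin (2r)`). -/
def bar {r : ℕ} (a : Fin (2 * r)) : Fin (2 * r) :=
  if h : (a : ℕ) < r then ⟨(a : ℕ) + r, by omega⟩
  else ⟨(a : ℕ) - r, by have := a.isLt; omega⟩

/-- Schottky data: `2r` disjoint compact intervals `I_a = [ξ₀ a, ξ₁ a]` on the real line and
transformations `γ_a ∈ SL(2,ℝ)` with `γ_ā = γ_a⁻¹` such that `γ_a` maps the complement (in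
`ℝ ∪ {∞}`) of the interior of `I_ā` onto `I_a`. -/
structure SchottkyData (r : ℕ) where
  hr : 2 ≤ r
  ξ₀ : Fin (2 * r) → ℝ
  ξ₁ : Fin (2 * r) → ℝ
  hlt : ∀ a, ξ₀ a < ξ₁ a
  hdisj : ∀ a b, a ≠ b → Disjoint (Icc (ξ₀ a) (ξ₁ a)) (Icc (ξ₀ b) (ξ₁ b))
  γ : Fin (2 * r) → SL2
  hinv : ∀ a, γ (bar a) = (γ a)⁻¹
  hmap : ∀ a, mobiusOP (γ a) ''
      (univ \ ((fun t : ℝ => (t : OnePoint ℝ)) '' Ioo (ξ₀ (bar a)) (ξ₁ (bar a))))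
      = (fun t : ℝ => (t : OnePoint ℝ)) '' Icc (ξ₀ a) (ξ₁ a)

namespace SchottkyData

variable {r : ℕ}

/-- `l` is a word: no letter is followed by its bar. -/
def IsWord (_ : SchottkyData r) (l : List (Fin (2 * r))) : Prop :=
  l.Chain' fun p q => q ≠ bar p

/-- The group element `γ_𝐚 = γ_{a_1} ⋯ γ_{a_n}` of a word. -/
def wordγ (S : SchottkyData r) (l : List (Fin (2 * r))) : SL2 :=
  (l.map S.γ).prod

/-- The interval `I_𝐚 = γ_{𝐚'}(I_{a_n})` of a nonempty word (and `∅` for the empty word). -/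
def wordI (S : SchottkyData r) (l : List (Fin (2 * r))) : Set ℝ :=
  if h : l = [] then ∅
  else mobius (S.wordγ l.dropLast) '' Icc (S.ξ₀ (l.getLast h)) (S.ξ₁ (l.getLast h))

/-- The limit set `Λ_Γ = ⋂_n ⋃_{𝐚 ∈ W_n} I_𝐚`. -/
def limitSet (S : SchottkyData r) : Set ℝ :=
  ⋂ n : ℕ, ⋃ (l : List (Fin (2 * r))) (_ : S.IsWord l ∧ l.length = n + 1), S.wordI l

/-- `μ` is the (δ-conformal) Patterson–Sullivan measure: a Borel probability measure
supported on the limit set satisfying the equivariance property under the group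
generated by the Schottky transformations. -/
def IsPS (S : SchottkyData r) (δ : ℝ) (μ : Measure ℝ) : Prop :=
  IsProbabilityMeasure μ ∧ μ S.limitSetᶜ = 0 ∧
    ∀ g ∈ Subgroup.closure (Set.range S.γ), ∀ f : ℝ → ℝ, Measurable f →
      (∃ C, ∀ x, |f x| ≤ C) →
      ∫ x, f x ∂μ = ∫ x, f (mobius g x) * mobiusDerivB g x ^ δ ∂μ

/-- The partition `Z(τ) = {𝐚 ∈ W° : |I_𝐚| ≤ τ < |I_{𝐚'}|}` (with `|I_∅| = ∞`). -/
def Zpart (S : SchottkyData r) (τ : ℝ) : Set (List (Fin (2 * r))) :=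
  {l | S.IsWord l ∧ l ≠ [] ∧ (MeasureTheory.volume (S.wordI l)).toReal ≤ τ ∧
    (l.dropLast = [] ∨ τ < (MeasureTheory.volume (S.wordI l.dropLast)).toReal)}

end SchottkyData

/-- The length `|I|` of an interval `I ⊂ ℝ`. -/
def ivlen (I : Set ℝ) : ℝ := (MeasureTheory.volume I).toReal

/-- `𝐚 ⇝ 𝐛` : the last letter of `𝐚` equals the first letter of `𝐛`. -/
def chn {X : Type*} (l m : List X) : Prop :=
  ∃ (h1 : l ≠ []) (h2 : m ≠ []), l.getLast h1 = m.head h2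

/-- The center of an interval. -/
def ctr (I : Set ℝ) : ℝ := (sInf I + sSup I) / 2

end

noncomputable section MobiusAux
open MeasureTheory Set Real

namespace SchAux

/-- denominator of the Möbius map -/
def den (g : SL2) (x : ℝ) : ℝ := g 1 0 * x + g 1 1

lemma mul_entry (g h : SL2) (i j : Fin 2) :
    (g*h) i j = g i 0 * h 0 j + g i 1 * h 1 j := by
  show ((g*h : SL2) : Matrix (Fin 2) (Fin 2) ℝ) i j = _
  rw [Matrix.SpecialLinearGroup.coe_mul, Matrix.mul_apply, Fin.sum_univ_two]

lemma det_eq (g : SL2) : g 0 0 * g 1 1 - g 0 1 * g 1 0 = 1 := by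
  have := g.prop; rwa [Matrix.det_fin_two] at this

lemma mobius_def (g : SL2) (x : ℝ) :
    mobius g x = (g 0 0 * x + g 0 1) / den g x := rfl

lemma den_cocycle (g h : SL2) (x : ℝ) (hx : den h x ≠ 0) :
    den (g*h) x = den g (mobius h x) * den h x := by
  simp only [den, mobius, mul_entry]
  have hx' : h 1 0 * x + h 1 1 ≠ 0 := hx
  rw [add_mul _ _ (_ + _), mul_assoc _ (_ / _), div_mul_cancel₀ _ hx']
  ring

lemma mobius_comp (g h : SL2) (x : ℝ) (hx : den h x ≠ 0)
    (hy : den g (mobius h x) ≠ 0) :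
    mobius (g*h) x = mobius g (mobius h x) := by
  have hgh : den (g*h) x ≠ 0 := by
    rw [den_cocycle g h x hx]; exact mul_ne_zero hy hx
  simp only [mobius_def, den, mul_entry, mobius] at *
  rw [div_eq_div_iff hgh hy]
  field_simp
  ring

lemma mobius_sub (g : SL2) (x y : ℝ) (hx : den g x ≠ 0) (hy : den g y ≠ 0) :
    mobius g x - mobius g y = (x - y) / (den g x * den g y) := by
  have hd := det_eq g
  simp only [mobius_def, den] at *
  rw [div_sub_div _ _ hx hy, div_eq_div_iff (mul_ne_zero hx hy) (mul_ne_zero hx hy)]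
  linear_combination (x - y) * ((g 1 0 * x + g 1 1) * (g 1 0 * y + g 1 1)) * hd

lemma mobius_inj (g : SL2) (x y : ℝ) (hx : den g x ≠ 0) (hy : den g y ≠ 0)
    (h : mobius g x = mobius g y) : x = y := by
  have := mobius_sub g x y hx hy
  rw [h, sub_self] at this
  rcases (div_eq_zero_iff.1 this.symm) with h1 | h1
  · exact sub_eq_zero.1 h1
  · exact absurd h1 (mul_ne_zero hx hy)

end SchAux
end MobiusAux

noncomputable section MobiusAux2
open MeasureTheory Set Real
namespace SchAux

lemma den_continuous (g : SL2) : Continuous (den g) := by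
  unfold den; fun_prop

lemma den_same_sign (g : SL2) (u v : ℝ) (H : ∀ x ∈ Icc u v, den g x ≠ 0)
    {x y : ℝ} (hx : x ∈ Icc u v) (hy : y ∈ Icc u v) : 0 < den g x * den g y := by
  have key : ∀ a b : ℝ, a ∈ Icc u v → b ∈ Icc u v → den g a < 0 → 0 < den g b → False := by
    intro a b ha hb hda hdb
    rcases le_total a b with hab | hab
    · have := intermediate_value_Icc hab ((den_continuous g).continuousOn)
      have h0 : (0:ℝ) ∈ Icc (den g a) (den g b) := ⟨hda.le, hdb.le⟩
      obtain ⟨z, hz, hz0⟩ := this h0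
      exact H z (Icc_subset_Icc ha.1 hb.2 hz) hz0
    · have := intermediate_value_Icc' hab ((den_continuous g).continuousOn)
      have h0 : (0:ℝ) ∈ Icc (den g a) (den g b) := ⟨hda.le, hdb.le⟩
      obtain ⟨z, hz, hz0⟩ := this h0
      exact H z (Icc_subset_Icc hb.1 ha.2 hz) hz0
  rcases lt_trichotomy (den g x) 0 with h1 | h1 | h1
  · rcases lt_trichotomy (den g y) 0 with h2 | h2 | h2
    · exact mul_pos_of_neg_of_neg h1 h2
    · exact absurd h2 (H y hy)
    · exact absurd (key x y hx hy h1 h2) (fun h => h)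
  · exact absurd h1 (H x hx)
  · rcases lt_trichotomy (den g y) 0 with h2 | h2 | h2
    · exact absurd (key y x hy hx h2 h1) (fun h => h)
    · exact absurd h2 (H y hy)
    · exact mul_pos h1 h2

lemma mobius_strictMonoOn (g : SL2) (u v : ℝ) (H : ∀ x ∈ Icc u v, den g x ≠ 0) :
    StrictMonoOn (mobius g) (Icc u v) := by
  intro x hx y hy hxy
  have h1 : mobius g y - mobius g x = (y - x) / (den g y * den g x) :=
    mobius_sub g y x (H y hy) (H x hx)
  have h2 : 0 < den g y * den g x := den_same_sign g u v H hy hx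
  have : 0 < mobius g y - mobius g x := by
    rw [h1]; exact div_pos (by linarith) h2
  linarith

lemma mobius_continuousOn (g : SL2) (u v : ℝ) (H : ∀ x ∈ Icc u v, den g x ≠ 0) :
    ContinuousOn (mobius g) (Icc u v) := by
  apply ContinuousOn.div (by fun_prop) ((den_continuous g).continuousOn) H

lemma mobius_image_Icc (g : SL2) (u v : ℝ) (huv : u ≤ v)
    (H : ∀ x ∈ Icc u v, den g x ≠ 0) :
    mobius g '' Icc u v = Icc (mobius g u) (mobius g v) := by
  apply Set.Subset.antisymm
  · rintro _ ⟨x, hx, rfl⟩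
    constructor
    · rcases eq_or_lt_of_le hx.1 with h | h
      · rw [← h]
      · exact (mobius_strictMonoOn g u v H ⟨le_refl u, huv⟩ hx h).le
    · rcases eq_or_lt_of_le hx.2 with h | h
      · rw [h]
      · exact (mobius_strictMonoOn g u v H hx ⟨huv, le_refl v⟩ h).le
  · exact intermediate_value_Icc huv (mobius_continuousOn g u v H)

lemma ivlen_Icc (a b : ℝ) (h : a ≤ b) : ivlen (Icc a b) = b - a := by
  rw [ivlen, Real.volume_Icc, ENNReal.toReal_ofReal (by linarith)]

lemma mobius_le (g : SL2) (u v : ℝ) (huv : u ≤ v) (H : ∀ x ∈ Icc u v, den g x ≠ 0) :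
    mobius g u ≤ mobius g v := by
  rcases eq_or_lt_of_le huv with h | h
  · rw [h]
  · exact (mobius_strictMonoOn g u v H ⟨le_refl u, huv⟩ ⟨huv, le_refl v⟩ h).le

lemma mobius_ivlen (g : SL2) (u v : ℝ) (huv : u ≤ v)
    (H : ∀ x ∈ Icc u v, den g x ≠ 0) :
    ivlen (mobius g '' Icc u v) = (v - u) / (den g u * den g v) := by
  rw [mobius_image_Icc g u v huv H, ivlen_Icc _ _ (mobius_le g u v huv H),
    mobius_sub g v u (H v ⟨huv, le_refl v⟩) (H u ⟨le_refl u, huv⟩), mul_comm]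

lemma ivlen_nonneg (A : Set ℝ) : 0 ≤ ivlen A := ENNReal.toReal_nonneg

lemma ivlen_mono_Icc (A : Set ℝ) (c d : ℝ) (hA : A ⊆ Icc c d) :
    ivlen A ≤ ivlen (Icc c d) := by
  rw [ivlen, ivlen]
  apply ENNReal.toReal_mono _ (measure_mono hA)
  rw [Real.volume_Icc]; exact ENNReal.ofReal_ne_top

lemma ivlen_disj_add (A B : Set ℝ) (c d : ℝ) (hA : A ⊆ Icc c d) (hB : B ⊆ Icc c d)
    (hmB : MeasurableSet B) (hdisj : Disjoint A B) :
    ivlen A + ivlen B ≤ ivlen (Icc c d) := by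
  have hfin : MeasureTheory.volume (Icc c d) ≠ ⊤ := by
    rw [Real.volume_Icc]; exact ENNReal.ofReal_ne_top
  have hAfin : MeasureTheory.volume A ≠ ⊤ :=
    fun h => hfin (top_le_iff.1 (h ▸ measure_mono hA))
  have hBfin : MeasureTheory.volume B ≠ ⊤ :=
    fun h => hfin (top_le_iff.1 (h ▸ measure_mono hB))
  have h1 : MeasureTheory.volume A + MeasureTheory.volume B ≤ MeasureTheory.volume (Icc c d) := by
    rw [← measure_union hdisj hmB]
    exact measure_mono (union_subset hA hB)
  calc ivlen A + ivlen B = (MeasureTheory.volume A + MeasureTheory.volume B).toReal := by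
        rw [ENNReal.toReal_add hAfin hBfin]; rfl
    _ ≤ ivlen (Icc c d) := ENNReal.toReal_mono hfin h1

end SchAux
end MobiusAux2

noncomputable section LetterAux
open MeasureTheory Set Real
namespace SchAux

variable {r : ℕ} (S : SchottkyData r)

lemma hmap_mem (a : Fin (2*r)) (x : OnePoint ℝ)
    (hx : x ∉ (fun t : ℝ => (t : OnePoint ℝ)) '' Ioo (S.ξ₀ (bar a)) (S.ξ₁ (bar a))) :
    mobiusOP (S.γ a) x ∈ (fun t : ℝ => (t : OnePoint ℝ)) '' Icc (S.ξ₀ a) (S.ξ₁ a) := by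
  rw [← S.hmap a]; exact ⟨x, ⟨trivial, hx⟩, rfl⟩

lemma letter_maps (a : Fin (2*r)) (x : ℝ)
    (hx : x ∉ Ioo (S.ξ₀ (bar a)) (S.ξ₁ (bar a))) :
    den (S.γ a) x ≠ 0 ∧ mobius (S.γ a) x ∈ Icc (S.ξ₀ a) (S.ξ₁ a) := by
  have hx' : (x : OnePoint ℝ) ∉ (fun t : ℝ => (t : OnePoint ℝ)) '' Ioo (S.ξ₀ (bar a)) (S.ξ₁ (bar a)) := by
    rintro ⟨t, ht, hte⟩
    exact hx (OnePoint.coe_eq_coe.1 hte ▸ ht)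
  have hmem := hmap_mem S a _ hx'
  have heval : mobiusOP (S.γ a) (x : OnePoint ℝ) =
      if (S.γ a) 1 0 * x + (S.γ a) 1 1 = 0 then OnePoint.infty
      else ((mobius (S.γ a) x : ℝ) : OnePoint ℝ) := rfl
  rw [heval] at hmem
  by_cases hden : (S.γ a) 1 0 * x + (S.γ a) 1 1 = 0
  · rw [if_pos hden] at hmem
    obtain ⟨t, _, hte⟩ := hmem
    exact absurd hte (OnePoint.coe_ne_infty t)
  · rw [if_neg hden] at hmem
    obtain ⟨t, ht, hte⟩ := hmem
    exact ⟨hden, OnePoint.coe_eq_coe.1 hte ▸ ht⟩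

lemma letter_c_ne (a : Fin (2*r)) : (S.γ a) 1 0 ≠ 0 := by
  intro hc
  have hx' : (OnePoint.infty : OnePoint ℝ) ∉ (fun t : ℝ => (t : OnePoint ℝ)) '' Ioo (S.ξ₀ (bar a)) (S.ξ₁ (bar a)) := by
    rintro ⟨t, _, hte⟩
    exact (OnePoint.coe_ne_infty t) hte
  have hmem := hmap_mem S a _ hx'
  have heval : mobiusOP (S.γ a) OnePoint.infty =
      if (S.γ a) 1 0 = 0 then OnePoint.infty else (((S.γ a) 0 0 / (S.γ a) 1 0 : ℝ) : OnePoint ℝ) := rfl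
  rw [heval, if_pos hc] at hmem
  obtain ⟨t, _, hte⟩ := hmem
  exact (OnePoint.coe_ne_infty t) hte

lemma pole_den_zero (g : SL2) (hc : g 1 0 ≠ 0) : den g (mobiusPole g) = 0 := by
  unfold den mobiusPole; field_simp; ring

lemma letter_pole_mem (a : Fin (2*r)) :
    mobiusPole (S.γ a) ∈ Ioo (S.ξ₀ (bar a)) (S.ξ₁ (bar a)) := by
  by_contra h
  exact (letter_maps S a _ h).1 (pole_den_zero _ (letter_c_ne S a))

lemma mem_Icc_not_Ioo {a b : Fin (2*r)} (hab : a ≠ b) {x : ℝ}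
    (hx : x ∈ Icc (S.ξ₀ a) (S.ξ₁ a)) : x ∉ Ioo (S.ξ₀ b) (S.ξ₁ b) := by
  intro hmem
  exact Set.disjoint_left.1 (S.hdisj a b hab) hx (Set.Ioo_subset_Icc_self hmem)

lemma wordγ_cons (a : Fin (2*r)) (l : List (Fin (2*r))) :
    S.wordγ (a :: l) = S.γ a * S.wordγ l := by
  unfold SchottkyData.wordγ; rw [List.map_cons, List.prod_cons]

lemma wordγ_singleton (a : Fin (2*r)) : S.wordγ [a] = S.γ a := by
  unfold SchottkyData.wordγ; simp

/-- Master word lemma. -/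
lemma word_maps (l : List (Fin (2*r))) (hl : S.IsWord l) (hne : l ≠ []) (x : ℝ)
    (hx : x ∉ Ioo (S.ξ₀ (bar (l.getLast hne))) (S.ξ₁ (bar (l.getLast hne)))) :
    den (S.wordγ l) x ≠ 0 ∧
      mobius (S.wordγ l) x ∈ Icc (S.ξ₀ (l.head hne)) (S.ξ₁ (l.head hne)) := by
  induction l with
  | nil => exact absurd rfl hne
  | cons a l' ih =>
    cases l' with
    | nil =>
      rw [wordγ_singleton]
      exact letter_maps S a x (by simpa using hx)
    | cons b t =>
      have hchain := (List.isChain_cons_cons.1 hl)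
      have hba : b ≠ bar a := hchain.1
      have hlast : (a :: b :: t).getLast (by simp) = (b :: t).getLast (by simp) :=
        List.getLast_cons (by simp)
      have ih' := ih hchain.2 (by simp) (by rw [hlast] at hx; exact hx)
      set y := mobius (S.wordγ (b :: t)) x with hy
      have hyI : y ∈ Icc (S.ξ₀ b) (S.ξ₁ b) := by simpa using ih'.2
      have hynI : y ∉ Ioo (S.ξ₀ (bar a)) (S.ξ₁ (bar a)) := mem_Icc_not_Ioo S hba hyI
      have hlm := letter_maps S a y hynI
      rw [wordγ_cons]
      constructor
      · rw [den_cocycle _ _ _ ih'.1]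
        exact mul_ne_zero hlm.1 ih'.1
      · rw [mobius_comp _ _ _ ih'.1 hlm.1]
        simpa using hlm.2

lemma word_c_ne (l : List (Fin (2*r))) (hl : S.IsWord l) (hne : l ≠ []) :
    (S.wordγ l) 1 0 ≠ 0 := by
  intro hc0
  set g := S.wordγ l with hg
  have hdet := det_eq g
  rw [hc0, mul_zero, sub_zero] at hdet
  have h11 : g 1 1 ≠ 0 := fun h => by rw [h, mul_zero] at hdet; exact one_ne_zero hdet.symm
  set s := g 0 0 / g 1 1 with hs
  have hspos : 0 < s := by
    have : s = 1 / (g 1 1)^2 := by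
      rw [hs, eq_div_iff (by positivity)]
      field_simp
      linear_combination hdet
    rw [this]; positivity
  set t := g 0 1 / g 1 1 with ht
  have hmob : ∀ x : ℝ, mobius g x = s * x + t := by
    intro x
    rw [mobius_def, den, hc0, zero_mul, zero_add, hs, ht]
    field_simp
  set q := l.getLast hne with hq
  set p := l.head hne with hp
  set x₀ := max (S.ξ₁ (bar q)) ((S.ξ₁ p + 1 - t) / s) with hx₀
  have hx₀n : x₀ ∉ Ioo (S.ξ₀ (bar q)) (S.ξ₁ (bar q)) := by
    intro hmem
    exact absurd hmem.2 (not_lt.2 (le_max_left _ _))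
  have hw := (word_maps S l hl hne x₀ hx₀n).2
  have h1 : mobius g x₀ ≤ S.ξ₁ p := hw.2
  have h2 : S.ξ₁ p + 1 - t ≤ s * x₀ := by
    calc S.ξ₁ p + 1 - t ≤ ((S.ξ₁ p + 1 - t) / s) * s := by
          rw [div_mul_cancel₀ _ (ne_of_gt hspos)]
      _ ≤ x₀ * s := by
          apply mul_le_mul_of_nonneg_right (le_max_right _ _) hspos.le
      _ = s * x₀ := mul_comm _ _
  rw [hmob x₀] at h1
  linarith

lemma word_pole_mem (l : List (Fin (2*r))) (hl : S.IsWord l) (hne : l ≠ []) :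
    mobiusPole (S.wordγ l) ∈ Ioo (S.ξ₀ (bar (l.getLast hne))) (S.ξ₁ (bar (l.getLast hne))) := by
  by_contra h
  exact (word_maps S l hl hne _ h).1 (pole_den_zero _ (word_c_ne S l hl hne))

lemma wordγ_mem_closure (l : List (Fin (2*r))) :
    S.wordγ l ∈ Subgroup.closure (Set.range S.γ) := by
  apply Subgroup.list_prod_mem
  intro x hx
  obtain ⟨a, _, rfl⟩ := List.mem_map.1 hx
  exact Subgroup.subset_closure ⟨a, rfl⟩

end SchAux
end LetterAux

noncomputable section ConstAux
open MeasureTheory Set Real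
namespace SchAux

lemma exists_pos_lb {α : Type*} [Fintype α] [Nonempty α] (f : α → ℝ) (hf : ∀ a, 0 < f a) :
    ∃ c > 0, ∀ a, c ≤ f a := by
  obtain ⟨a₀, -, h⟩ := Finset.exists_min_image Finset.univ f ⟨Classical.arbitrary α, Finset.mem_univ _⟩
  exact ⟨f a₀, hf a₀, fun a => h a (Finset.mem_univ a)⟩

variable {r : ℕ} (S : SchottkyData r)

include S in
lemma fin_nonempty : (0:ℕ) < 2*r := by have := S.hr; omega

include S in
lemma ex_R : ∃ R : ℝ, 1 ≤ R ∧ ∀ a, Icc (S.ξ₀ a) (S.ξ₁ a) ⊆ Icc (-R) R := by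
  have : Nonempty (Fin (2*r)) := ⟨⟨0, fin_nonempty S⟩⟩
  obtain ⟨M, -, hM⟩ := Finset.exists_max_image Finset.univ
    (fun a => max |S.ξ₀ a| |S.ξ₁ a|) ⟨Classical.arbitrary _, Finset.mem_univ _⟩
  refine ⟨max 1 (max |S.ξ₀ M| |S.ξ₁ M|), le_max_left _ _, fun a x hx => ?_⟩
  have h1 := hM a (Finset.mem_univ a)
  constructor
  · have : -(max |S.ξ₀ M| |S.ξ₁ M|) ≤ S.ξ₀ a := by
      have := abs_le.1 (le_refl |S.ξ₀ a|) |>.1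
      have h2 : |S.ξ₀ a| ≤ max |S.ξ₀ M| |S.ξ₁ M| := le_trans (le_max_left _ _) h1
      linarith [neg_abs_le (S.ξ₀ a)]
    calc -(max 1 (max |S.ξ₀ M| |S.ξ₁ M|)) ≤ -(max |S.ξ₀ M| |S.ξ₁ M|) := by
          apply neg_le_neg; exact le_max_right _ _
      _ ≤ S.ξ₀ a := this
      _ ≤ x := hx.1
  · have h2 : |S.ξ₁ a| ≤ max |S.ξ₀ M| |S.ξ₁ M| := le_trans (le_max_right _ _) h1
    calc x ≤ S.ξ₁ a := hx.2
      _ ≤ |S.ξ₁ a| := le_abs_self _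
      _ ≤ max 1 (max |S.ξ₀ M| |S.ξ₁ M|) := le_trans h2 (le_max_right _ _)

lemma interval_order {a b : Fin (2*r)} (hab : a ≠ b) :
    S.ξ₁ a < S.ξ₀ b ∨ S.ξ₁ b < S.ξ₀ a := by
  by_contra h
  push_neg at h
  have hmem1 : max (S.ξ₀ a) (S.ξ₀ b) ∈ Icc (S.ξ₀ a) (S.ξ₁ a) :=
    ⟨le_max_left _ _, max_le (S.hlt a).le h.1⟩
  have hmem2 : max (S.ξ₀ a) (S.ξ₀ b) ∈ Icc (S.ξ₀ b) (S.ξ₁ b) :=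
    ⟨le_max_right _ _, max_le h.2 (S.hlt b).le⟩
  exact Set.disjoint_left.1 (S.hdisj a b hab) hmem1 hmem2

lemma gap_bound {a b : Fin (2*r)} (hab : a ≠ b) :
    0 < max (S.ξ₀ b - S.ξ₁ a) (S.ξ₀ a - S.ξ₁ b) ∧
    ∀ x ∈ Icc (S.ξ₀ a) (S.ξ₁ a), ∀ y ∈ Icc (S.ξ₀ b) (S.ξ₁ b),
      max (S.ξ₀ b - S.ξ₁ a) (S.ξ₀ a - S.ξ₁ b) ≤ |x - y| := by
  rcases interval_order S hab with h | h
  · refine ⟨lt_max_of_lt_left (by linarith), fun x hx y hy => ?_⟩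
    have h1 : S.ξ₀ a - S.ξ₁ b ≤ S.ξ₀ b - S.ξ₁ a := by
      have := (S.hlt a); have := (S.hlt b); linarith
    rw [max_eq_left h1, abs_sub_comm, abs_of_nonneg (by linarith [hx.2, hy.1])]
    linarith [hx.2, hy.1]
  · refine ⟨lt_max_of_lt_right (by linarith), fun x hx y hy => ?_⟩
    have h1 : S.ξ₀ b - S.ξ₁ a ≤ S.ξ₀ a - S.ξ₁ b := by
      have := (S.hlt a); have := (S.hlt b); linarith
    rw [max_eq_right h1, abs_of_nonneg (by linarith [hy.2, hx.1])]
    linarith [hy.2, hx.1]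

include S in
lemma ex_G : ∃ G > (0:ℝ), ∀ a b : Fin (2*r), a ≠ b →
    ∀ x ∈ Icc (S.ξ₀ a) (S.ξ₁ a), ∀ y ∈ Icc (S.ξ₀ b) (S.ξ₁ b), G ≤ |x - y| := by
  have : Nonempty {p : Fin (2*r) × Fin (2*r) // p.1 ≠ p.2} := by
    refine ⟨⟨(⟨0, fin_nonempty S⟩, ⟨1, by have := S.hr; omega⟩), ?_⟩⟩
    simp [Prod.ext_iff, Fin.ext_iff]
  obtain ⟨c, hc, hlb⟩ := exists_pos_lb
    (fun p : {p : Fin (2*r) × Fin (2*r) // p.1 ≠ p.2} =>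
      max (S.ξ₀ p.1.2 - S.ξ₁ p.1.1) (S.ξ₀ p.1.1 - S.ξ₁ p.1.2))
    (fun p => (gap_bound S p.2).1)
  refine ⟨c, hc, fun a b hab x hx y hy => ?_⟩
  exact le_trans (hlb ⟨(a, b), hab⟩) ((gap_bound S hab).2 x hx y hy)

lemma ex_lmin : ∃ c > (0:ℝ), ∀ a, c ≤ S.ξ₁ a - S.ξ₀ a := by
  have : Nonempty (Fin (2*r)) := ⟨⟨0, fin_nonempty S⟩⟩
  exact exists_pos_lb _ (fun a => by linarith [S.hlt a])

include S in
lemma exists_third (a b : Fin (2*r)) : ∃ c : Fin (2*r), c ≠ a ∧ c ≠ b := by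
  have h1 : ({a, b} : Finset (Fin (2*r))).card ≤ 2 :=
    (Finset.card_insert_le a {b}).trans (by simp)
  have h2 : (4:ℕ) ≤ (Finset.univ : Finset (Fin (2*r))).card := by
    rw [Finset.card_univ, Fintype.card_fin]; have := S.hr; omega
  have h3 : 0 < ((Finset.univ : Finset (Fin (2*r))) \ {a, b}).card := by
    rw [Finset.card_sdiff_of_subset (Finset.subset_univ _)]; omega
  obtain ⟨c, hc⟩ := Finset.card_pos.1 h3
  rw [Finset.mem_sdiff] at hc
  simp only [Finset.mem_insert, Finset.mem_singleton] at hc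
  push_neg at hc
  exact ⟨c, hc.2.1, hc.2.2⟩

lemma wordI_snoc (l : List (Fin (2*r))) (b : Fin (2*r)) :
    S.wordI (l ++ [b]) = mobius (S.wordγ l) '' Icc (S.ξ₀ b) (S.ξ₁ b) := by
  unfold SchottkyData.wordI
  rw [dif_neg (by simp)]
  simp [List.dropLast_concat, List.getLast_concat]

lemma isWord_snoc_iff (l : List (Fin (2*r))) (b : Fin (2*r)) :
    S.IsWord (l ++ [b]) ↔ S.IsWord l ∧ ∀ (hne : l ≠ []), b ≠ bar (l.getLast hne) := by
  unfold SchottkyData.IsWord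
  unfold List.Chain'
  rw [List.isChain_append]
  constructor
  · rintro ⟨h1, -, h3⟩
    refine ⟨h1, fun hne => ?_⟩
    exact h3 _ (by rw [List.getLast?_eq_getLast hne]; rfl) b (by simp)
  · rintro ⟨h1, h2⟩
    refine ⟨h1, List.isChain_singleton b, fun x hx y hy => ?_⟩
    cases l with
    | nil => simp at hx
    | cons a t =>
      rw [List.getLast?_eq_getLast (l := a :: t) (by simp)] at hx
      simp at hy
      rw [← hy]
      have := h2 (by simp)
      rw [Option.mem_def, Option.some_inj] at hx
      exact hx ▸ this

end SchAux
end ConstAux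

noncomputable section WordAux
open MeasureTheory Set Real
namespace SchAux

variable {r : ℕ} (S : SchottkyData r)

lemma den_factor (g : SL2) (hc : g 1 0 ≠ 0) (x : ℝ) :
    den g x = g 1 0 * (x - mobiusPole g) := by
  unfold den mobiusPole; field_simp; ring

lemma wordγ_nil : S.wordγ [] = 1 := rfl

lemma mobius_one (x : ℝ) : mobius (1 : SL2) x = x := by
  unfold mobius
  norm_num [Matrix.SpecialLinearGroup.coe_one]

lemma den_one (x : ℝ) : den (1 : SL2) x = 1 := by
  unfold den
  norm_num [Matrix.SpecialLinearGroup.coe_one]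

lemma wordγ_snoc (l : List (Fin (2*r))) (a : Fin (2*r)) :
    S.wordγ (l ++ [a]) = S.wordγ l * S.γ a := by
  unfold SchottkyData.wordγ
  rw [List.map_append, List.prod_append, List.map_singleton, List.prod_singleton]

lemma isWord_of_snoc {l : List (Fin (2*r))} {b : Fin (2*r)} (h : S.IsWord (l ++ [b])) :
    S.IsWord l := ((isWord_snoc_iff S l b).1 h).1

lemma snoc_last_ne {l : List (Fin (2*r))} {b : Fin (2*r)} (h : S.IsWord (l ++ [b]))
    (hne : l ≠ []) : b ≠ bar (l.getLast hne) := ((isWord_snoc_iff S l b).1 h).2 hne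

lemma snoc_den {l : List (Fin (2*r))} {b : Fin (2*r)} (hlb : S.IsWord (l ++ [b])) :
    ∀ x ∈ Icc (S.ξ₀ b) (S.ξ₁ b), den (S.wordγ l) x ≠ 0 := by
  intro x hx
  cases eq_or_ne l [] with
  | inl h => rw [h, wordγ_nil, den_one]; exact one_ne_zero
  | inr h =>
    exact (word_maps S l (isWord_of_snoc S hlb) h x
      (mem_Icc_not_Ioo S (snoc_last_ne S hlb h) hx)).1

lemma snoc_mem_head {l : List (Fin (2*r))} {b : Fin (2*r)} (hlb : S.IsWord (l ++ [b]))
    (hne : l ≠ []) : ∀ x ∈ Icc (S.ξ₀ b) (S.ξ₁ b),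
      mobius (S.wordγ l) x ∈ Icc (S.ξ₀ (l.head hne)) (S.ξ₁ (l.head hne)) := by
  intro x hx
  exact (word_maps S l (isWord_of_snoc S hlb) hne x
    (mem_Icc_not_Ioo S (snoc_last_ne S hlb hne) hx)).2

lemma wordI_snoc_Icc {l : List (Fin (2*r))} {b : Fin (2*r)} (hlb : S.IsWord (l ++ [b])) :
    S.wordI (l ++ [b]) =
      Icc (mobius (S.wordγ l) (S.ξ₀ b)) (mobius (S.wordγ l) (S.ξ₁ b)) := by
  rw [wordI_snoc, mobius_image_Icc _ _ _ (S.hlt b).le (snoc_den S hlb)]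

lemma wordI_snoc_ivlen {l : List (Fin (2*r))} {b : Fin (2*r)} (hlb : S.IsWord (l ++ [b])) :
    ivlen (S.wordI (l ++ [b])) =
      (S.ξ₁ b - S.ξ₀ b) / (den (S.wordγ l) (S.ξ₀ b) * den (S.wordγ l) (S.ξ₁ b)) := by
  rw [wordI_snoc, mobius_ivlen _ _ _ (S.hlt b).le (snoc_den S hlb)]

lemma snoc_den_pos {l : List (Fin (2*r))} {b : Fin (2*r)} (hlb : S.IsWord (l ++ [b])) :
    0 < den (S.wordγ l) (S.ξ₀ b) * den (S.wordγ l) (S.ξ₁ b) :=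
  den_same_sign _ _ _ (snoc_den S hlb) ⟨le_refl _, (S.hlt b).le⟩ ⟨(S.hlt b).le, le_refl _⟩

lemma wordI_ivlen_pos {l : List (Fin (2*r))} {b : Fin (2*r)} (hlb : S.IsWord (l ++ [b])) :
    0 < ivlen (S.wordI (l ++ [b])) := by
  rw [wordI_snoc_ivlen S hlb]
  exact div_pos (by linarith [S.hlt b]) (snoc_den_pos S hlb)

lemma concat_of_ne_nil {α : Type*} {m : List α} (hne : m ≠ []) :
    ∃ l b, m = l ++ [b] := by
  rcases List.eq_nil_or_concat m with h | ⟨l, b, h⟩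
  · exact absurd h hne
  · exact ⟨l, b, by rw [h, List.concat_eq_append]⟩

lemma wordI_sub_head {m : List (Fin (2*r))} (hm : S.IsWord m) (hne : m ≠ []) :
    S.wordI m ⊆ Icc (S.ξ₀ (m.head hne)) (S.ξ₁ (m.head hne)) := by
  obtain ⟨l, b, rfl⟩ := concat_of_ne_nil hne
  rw [wordI_snoc]
  rintro _ ⟨x, hx, rfl⟩
  cases eq_or_ne l [] with
  | inl h =>
    subst h
    rw [wordγ_nil, mobius_one]
    simpa using hx
  | inr h =>
    have hh : (l ++ [b]).head hne = l.head h := List.head_append_of_ne_nil h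
    rw [hh]
    exact snoc_mem_head S hm h x hx

end SchAux
end WordAux

noncomputable section WordAux2
open MeasureTheory Set Real
namespace SchAux

variable {r : ℕ} (S : SchottkyData r)

lemma getLast_snoc (l : List (Fin (2*r))) (a : Fin (2*r)) :
    (l ++ [a]).getLast (by simp) = a := by
  simp [List.getLast_concat]

lemma wordI_nest {l : List (Fin (2*r))} {b : Fin (2*r)} (hl : l ≠ [])
    (hm : S.IsWord (l ++ [b])) : S.wordI (l ++ [b]) ⊆ S.wordI l := by
  obtain ⟨l', a, rfl⟩ := concat_of_ne_nil hl
  have hla : S.IsWord (l' ++ [a]) := isWord_of_snoc S hm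
  have hba : b ≠ bar a := by
    have := snoc_last_ne S hm (by simp)
    rwa [getLast_snoc] at this
  rw [wordI_snoc S (l' ++ [a]) b, wordI_snoc S l' a]
  rintro _ ⟨x, hx, rfl⟩
  have hden1 : den (S.γ a) x ≠ 0 := (letter_maps S a x (mem_Icc_not_Ioo S hba hx)).1
  have hmem1 : mobius (S.γ a) x ∈ Icc (S.ξ₀ a) (S.ξ₁ a) :=
    (letter_maps S a x (mem_Icc_not_Ioo S hba hx)).2
  have hden2 : den (S.wordγ l') (mobius (S.γ a) x) ≠ 0 := snoc_den S hla _ hmem1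
  rw [wordγ_snoc, mobius_comp _ _ _ hden1 hden2]
  exact ⟨mobius (S.γ a) x, hmem1, rfl⟩

lemma word_pair_disjoint {l : List (Fin (2*r))} {b b' : Fin (2*r)}
    (hlb : S.IsWord (l ++ [b])) (hlb' : S.IsWord (l ++ [b'])) (hbb' : b ≠ b') :
    Disjoint (S.wordI (l ++ [b])) (S.wordI (l ++ [b'])) := by
  rw [wordI_snoc, wordI_snoc, Set.disjoint_left]
  rintro _ ⟨x, hx, rfl⟩ ⟨y, hy, heq⟩
  have := mobius_inj _ y x (snoc_den S hlb' y hy) (snoc_den S hlb x hx) heq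
  rw [this] at hy
  exact Set.disjoint_left.1 (S.hdisj b b' hbb') hx hy

lemma isWord_tail {a : Fin (2*r)} {t : List (Fin (2*r))} (h : S.IsWord (a :: t)) :
    S.IsWord t := List.IsChain.tail h

lemma cons_head_ne {a : Fin (2*r)} {t : List (Fin (2*r))} (ht : t ≠ [])
    (hat : S.IsWord (a :: t)) : t.head ht ≠ bar a := by
  cases t with
  | nil => exact absurd rfl ht
  | cons c t' => exact (List.isChain_cons_cons.1 hat).1

lemma wordI_cons_den {a : Fin (2*r)} {t : List (Fin (2*r))} (ht : t ≠ [])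
    (hat : S.IsWord (a :: t)) : ∀ x ∈ S.wordI t, den (S.γ a) x ≠ 0 := by
  intro x hx
  have hx' := wordI_sub_head S (isWord_tail S hat) ht hx
  exact (letter_maps S a x (mem_Icc_not_Ioo S (cons_head_ne S ht hat) hx')).1

lemma wordI_cons {a : Fin (2*r)} {t : List (Fin (2*r))} (ht : t ≠ [])
    (hat : S.IsWord (a :: t)) : S.wordI (a :: t) = mobius (S.γ a) '' S.wordI t := by
  obtain ⟨l, b, rfl⟩ := concat_of_ne_nil ht
  have h1 : a :: (l ++ [b]) = (a :: l) ++ [b] := by simp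
  rw [h1, wordI_snoc S (a :: l) b, wordI_snoc S l b, Set.image_image]
  apply Set.image_congr
  intro x hx
  have hden1 : den (S.wordγ l) x ≠ 0 := snoc_den S (isWord_tail S hat) x hx
  have hden2 : den (S.γ a) (mobius (S.wordγ l) x) ≠ 0 := by
    apply wordI_cons_den S ht hat
    rw [wordI_snoc]
    exact ⟨x, hx, rfl⟩
  rw [wordγ_cons, mobius_comp _ _ _ hden1 hden2]

lemma word_incomp_disjoint (m : List (Fin (2*r))) : ∀ (m' : List (Fin (2*r))),
    S.IsWord m → S.IsWord m' → m ≠ [] → m' ≠ [] →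
    ¬ m <+: m' → ¬ m' <+: m → Disjoint (S.wordI m) (S.wordI m') := by
  induction m with
  | nil => intro m' _ _ hne; exact absurd rfl hne
  | cons a t ih =>
    intro m' hm hm' _ hne' hp1 hp2
    cases m' with
    | nil => exact absurd rfl hne'
    | cons a' t' =>
      by_cases haa : a = a'
      · subst haa
        have ht : t ≠ [] := by
          rintro rfl
          exact hp1 (List.cons_prefix_cons.2 ⟨rfl, List.nil_prefix⟩)
        have ht' : t' ≠ [] := by
          rintro rfl
          exact hp2 (List.cons_prefix_cons.2 ⟨rfl, List.nil_prefix⟩)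
        have hd : Disjoint (S.wordI t) (S.wordI t') := by
          apply ih t' (isWord_tail S hm) (isWord_tail S hm') ht ht'
          · intro h; exact hp1 (List.cons_prefix_cons.2 ⟨rfl, h⟩)
          · intro h; exact hp2 (List.cons_prefix_cons.2 ⟨rfl, h⟩)
        rw [wordI_cons S ht hm, wordI_cons S ht' hm', Set.disjoint_left]
        rintro _ ⟨x, hx, rfl⟩ ⟨y, hy, heq⟩
        have := mobius_inj _ y x (wordI_cons_den S ht' hm' y hy)
          (wordI_cons_den S ht hm x hx) heq
        rw [this] at hy
        exact Set.disjoint_left.1 hd hx hy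
      · apply Set.disjoint_of_subset (wordI_sub_head S hm (by simp))
          (wordI_sub_head S hm' (by simp))
        simpa using S.hdisj a a' haa

lemma wordI_prefix_sub (m : List (Fin (2*r))) (hm : S.IsWord m)
    {m' : List (Fin (2*r))} (hne' : m' ≠ []) (hpre : m' <+: m) :
    S.wordI m ⊆ S.wordI m' := by
  induction m using List.reverseRecOn with
  | nil => exact absurd (List.prefix_nil.1 hpre) hne'
  | append_singleton l b ih =>
    by_cases heq : m' = l ++ [b]
    · rw [heq]
    · have hpl : m' <+: l := by
        rcases List.prefix_concat_iff.1 hpre with h1 | h1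
        exacts [absurd h1 heq, h1]
      have hlne : l ≠ [] := by
        rintro rfl
        exact hne' (List.prefix_nil.1 hpl)
      exact (wordI_nest S hlne hm).trans (ih (isWord_of_snoc S hm) hpl)

lemma wordI_isIcc (m : List (Fin (2*r))) (hm : S.IsWord m) (hne : m ≠ []) :
    ∃ A B : ℝ, A ≤ B ∧ S.wordI m = Icc A B := by
  obtain ⟨l, b, rfl⟩ := concat_of_ne_nil hne
  refine ⟨_, _, ?_, wordI_snoc_Icc S hm⟩
  exact mobius_le _ _ _ (S.hlt b).le (snoc_den S hm)

lemma wordI_ivlen_mono (m m' : List (Fin (2*r))) (hm : S.IsWord m) (hm' : S.IsWord m')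
    (hne' : m' ≠ []) (hpre : m' <+: m) :
    ivlen (S.wordI m) ≤ ivlen (S.wordI m') := by
  obtain ⟨A, B, hAB, hIcc⟩ := wordI_isIcc S m' hm' hne'
  rw [hIcc]
  exact ivlen_mono_Icc _ _ _ (hIcc ▸ wordI_prefix_sub S m hm hne' hpre)

end SchAux
end WordAux2

noncomputable section ArithAux
open Set Real
namespace SchAux

lemma sandwich {k P Q w ball R G : ℝ} (ℓ : ℝ) (hk : 0 < k) (hP0 : 0 < P)
    (hG : 0 < G) (hR : 1 ≤ R) (hℓ : 0 < ℓ)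
    (hQ1 : G^2 ≤ Q) (hQ2 : Q ≤ 4*R^2) (hP1 : G^2 ≤ P) (hP2 : P ≤ 4*R^2)
    (hw1 : ℓ ≤ w) (hw2 : w ≤ 2*R)
    (hb1 : 1/(1+R^2) ≤ ball) (hb2 : ball ≤ 1+R^2) :
    (G^2/((1+R^2)*((4*R^2)*(2*R)))) * (w/(k*P)) ≤ ball * (k*Q)⁻¹ ∧
    ball * (k*Q)⁻¹ ≤ (((1+R^2)*(4*R^2))/(G^2*ℓ)) * (w/(k*P)) := by
  have hR0 : (0:ℝ) < R := lt_of_lt_of_le one_pos hR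
  have hQ0 : 0 < Q := lt_of_lt_of_le (by positivity) hQ1
  have hw0 : 0 < w := lt_of_lt_of_le hℓ hw1
  have hb0 : 0 < ball := lt_of_lt_of_le (by positivity) hb1
  constructor
  · rw [← div_eq_mul_inv, div_mul_div_comm,
      div_le_div_iff₀ (by positivity) (by positivity)]
    have h1 : 1 ≤ ball*(1+R^2) := by
      rw [div_le_iff₀ (by positivity : (0:ℝ) < 1+R^2)] at hb1
      linarith
    have h2 : G^2*w*Q ≤ P*((2*R)*(4*R^2)) := by
      calc G^2*w*Q = (G^2*w)*Q := by ring
        _ ≤ (P*w)*Q :=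
          mul_le_mul_of_nonneg_right (mul_le_mul_of_nonneg_right hP1 hw0.le) hQ0.le
        _ ≤ (P*(2*R))*Q :=
          mul_le_mul_of_nonneg_right (mul_le_mul_of_nonneg_left hw2 hP0.le) hQ0.le
        _ ≤ (P*(2*R))*(4*R^2) := mul_le_mul_of_nonneg_left hQ2 (by positivity)
        _ = P*((2*R)*(4*R^2)) := by ring
    calc G^2*w*(k*Q) = k*(G^2*w*Q) := by ring
      _ ≤ k*(P*((2*R)*(4*R^2))) := mul_le_mul_of_nonneg_left h2 hk.le
      _ = k*(1*(P*((2*R)*(4*R^2)))) := by ring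
      _ ≤ k*((ball*(1+R^2))*(P*((2*R)*(4*R^2)))) := by
          apply mul_le_mul_of_nonneg_left _ hk.le
          apply mul_le_mul_of_nonneg_right h1 (by positivity)
      _ = ball*((1+R^2)*((4*R^2)*(2*R))*(k*P)) := by ring
  · rw [← div_eq_mul_inv, div_mul_div_comm,
      div_le_div_iff₀ (by positivity) (by positivity)]
    have h1 : ball*P ≤ (1+R^2)*(4*R^2) := mul_le_mul hb2 hP2 hP0.le (by positivity)
    have h2 : G^2*ℓ ≤ Q*w := mul_le_mul hQ1 hw1 hℓ.le hQ0.le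
    calc ball*(G^2*ℓ*(k*P)) = k*((ball*P)*(G^2*ℓ)) := by ring
      _ ≤ k*(((1+R^2)*(4*R^2))*(G^2*ℓ)) := by
          apply mul_le_mul_of_nonneg_left _ hk.le
          apply mul_le_mul_of_nonneg_right h1 (by positivity)
      _ ≤ k*(((1+R^2)*(4*R^2))*(Q*w)) := by
          apply mul_le_mul_of_nonneg_left _ hk.le
          apply mul_le_mul_of_nonneg_left h2 (by positivity)
      _ = ((1+R^2)*(4*R^2))*w*(k*Q) := by ring

lemma ratio_aux {θ G R w w' k P P' : ℝ} (hk : 0 < k) (hP : 0 < P) (hP' : 0 < P')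
    (hG : 0 < G) (hR : 0 < R) (hw : 0 < w) (hθ : 0 < θ)
    (h1 : θ*w ≤ w') (h2 : G^2 ≤ P) (h3 : P' ≤ 4*R^2) :
    (θ*(G^2/(4*R^2))) * (w/(k*P)) ≤ w'/(k*P') := by
  have hw' : 0 < w' := lt_of_lt_of_le (by positivity) h1
  rw [show θ*(G^2/(4*R^2)) = (θ*G^2)/(4*R^2) by ring, div_mul_div_comm,
    div_le_div_iff₀ (by positivity) (by positivity)]
  have h4 : G^2*P' ≤ P*(4*R^2) := mul_le_mul h2 h3 hP'.le hP.le
  calc θ*G^2*w*(k*P') = k*((θ*w)*(G^2*P')) := by ring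
    _ ≤ k*(w'*(G^2*P')) := by
        apply mul_le_mul_of_nonneg_left _ hk.le
        apply mul_le_mul_of_nonneg_right h1 (by positivity)
    _ ≤ k*(w'*(P*(4*R^2))) := by
        apply mul_le_mul_of_nonneg_left _ hk.le
        apply mul_le_mul_of_nonneg_left h4 hw'.le
    _ = w'*((4*R^2)*(k*P)) := by ring

end SchAux
end ArithAux

noncomputable section ConstsAux
open MeasureTheory Set Real
namespace SchAux

variable {r : ℕ}

structure Consts (S : SchottkyData r) where
  R : ℝ
  G : ℝ
  ℓ : ℝ
  θ : ℝ
  hR : 1 ≤ R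
  hsub : ∀ a, Icc (S.ξ₀ a) (S.ξ₁ a) ⊆ Icc (-R) R
  hG : 0 < G
  hsep : ∀ a b, a ≠ b → ∀ x ∈ Icc (S.ξ₀ a) (S.ξ₁ a), ∀ y ∈ Icc (S.ξ₀ b) (S.ξ₁ b), G ≤ |x - y|
  hl : 0 < ℓ
  hlb : ∀ a, ℓ ≤ S.ξ₁ a - S.ξ₀ a
  hθ : 0 < θ
  hθlb : ∀ a b : Fin (2*r), b ≠ bar a →
    θ * (S.ξ₁ a - S.ξ₀ a) ≤ ivlen (mobius (S.γ a) '' Icc (S.ξ₀ b) (S.ξ₁ b))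

variable (S : SchottkyData r)

lemma isWord_pair {a b : Fin (2*r)} (hba : b ≠ bar a) : S.IsWord [a, b] :=
  List.isChain_cons_cons.2 ⟨hba, List.isChain_singleton b⟩

lemma pair_ivlen_pos {a b : Fin (2*r)} (hba : b ≠ bar a) :
    0 < ivlen (mobius (S.γ a) '' Icc (S.ξ₀ b) (S.ξ₁ b)) := by
  have h := wordI_ivlen_pos S (l := [a]) (b := b) (by
    have : [a] ++ [b] = [a, b] := rfl
    rw [this]; exact isWord_pair S hba)
  rwa [wordI_snoc, wordγ_singleton] at h

lemma consts_ex : Nonempty (Consts S) := by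
  obtain ⟨R, hR, hsub⟩ := ex_R S
  obtain ⟨G, hG, hsep⟩ := ex_G S
  obtain ⟨ℓ, hℓ, hlb⟩ := ex_lmin S
  have hne : Nonempty {p : Fin (2*r) × Fin (2*r) // p.2 ≠ bar p.1} := by
    obtain ⟨c, hc, -⟩ := exists_third S (bar ⟨0, fin_nonempty S⟩) (bar ⟨0, fin_nonempty S⟩)
    exact ⟨⟨(⟨0, fin_nonempty S⟩, c), hc⟩⟩
  obtain ⟨θ, hθ, hθlb⟩ := exists_pos_lb
    (fun p : {p : Fin (2*r) × Fin (2*r) // p.2 ≠ bar p.1} =>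
      ivlen (mobius (S.γ p.1.1) '' Icc (S.ξ₀ p.1.2) (S.ξ₁ p.1.2)) / (S.ξ₁ p.1.1 - S.ξ₀ p.1.1))
    (fun p => div_pos (pair_ivlen_pos S p.2) (by linarith [S.hlt p.1.1]))
  refine ⟨⟨R, G, ℓ, θ, hR, hsub, hG, hsep, hℓ, hlb, hθ, fun a b hba => ?_⟩⟩
  have := hθlb ⟨(a, b), hba⟩
  rw [le_div_iff₀ (by linarith [S.hlt a])] at this
  linarith [this]

variable {S}

lemma abs_sub_le_2R (K : Consts S) {x y : ℝ} (hx : x ∈ Icc (-K.R) K.R)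
    (hy : y ∈ Icc (-K.R) K.R) : |x - y| ≤ 2*K.R := by
  rw [abs_sub_le_iff]
  constructor <;> linarith [hx.1, hx.2, hy.1, hy.2]

lemma G_le_2R (K : Consts S) : K.G ≤ 2*K.R := by
  have h01 : (⟨0, fin_nonempty S⟩ : Fin (2*r)) ≠ ⟨1, by have := S.hr; omega⟩ := by
    simp [Fin.ext_iff]
  set a : Fin (2*r) := ⟨0, fin_nonempty S⟩
  set b : Fin (2*r) := ⟨1, by have := S.hr; omega⟩
  have h1 := K.hsep a b h01 (S.ξ₀ a) ⟨le_refl _, (S.hlt a).le⟩ (S.ξ₀ b) ⟨le_refl _, (S.hlt b).le⟩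
  have h2 := abs_sub_le_2R K (K.hsub a ⟨le_refl _, (S.hlt a).le⟩) (K.hsub b ⟨le_refl _, (S.hlt b).le⟩)
  linarith

lemma P_upper (K : Consts S) {p x y : ℝ} (hx : x ∈ Icc (-K.R) K.R)
    (hy : y ∈ Icc (-K.R) K.R) (hp : p ∈ Icc (-K.R) K.R) (hpos : 0 < (x - p)*(y - p)) :
    (x - p)*(y - p) ≤ 4*K.R^2 := by
  have h1 : |x - p| ≤ 2*K.R := abs_sub_le_2R K hx hp
  have h2 : |y - p| ≤ 2*K.R := abs_sub_le_2R K hy hp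
  calc (x - p)*(y - p) = |(x - p)*(y - p)| := (abs_of_pos hpos).symm
    _ = |x - p| * |y - p| := abs_mul _ _
    _ ≤ (2*K.R)*(2*K.R) := mul_le_mul h1 h2 (abs_nonneg _) (by linarith [K.hR])
    _ = 4*K.R^2 := by ring

lemma P_lower (K : Consts S) {p x y : ℝ} {e f : Fin (2*r)} (hef : e ≠ f)
    (hp : p ∈ Icc (S.ξ₀ f) (S.ξ₁ f)) (hx : x ∈ Icc (S.ξ₀ e) (S.ξ₁ e))
    (hy : y ∈ Icc (S.ξ₀ e) (S.ξ₁ e)) (hpos : 0 < (x - p)*(y - p)) :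
    K.G^2 ≤ (x - p)*(y - p) := by
  have h1 : K.G ≤ |x - p| := K.hsep e f hef x hx p hp
  have h2 : K.G ≤ |y - p| := K.hsep e f hef y hy p hp
  calc K.G^2 = K.G * K.G := sq K.G
    _ ≤ |x - p| * |y - p| := mul_le_mul h1 h2 K.hG.le (abs_nonneg _)
    _ = |(x - p)*(y - p)| := (abs_mul _ _).symm
    _ = (x - p)*(y - p) := abs_of_pos hpos

lemma ball_bounds (K : Consts S) {x y : ℝ} (hx : x ∈ Icc (-K.R) K.R)
    (hy : y ∈ Icc (-K.R) K.R) :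
    1/(1+K.R^2) ≤ (1 + x^2)/(1 + y^2) ∧ (1 + x^2)/(1 + y^2) ≤ 1+K.R^2 := by
  have hx2 : x^2 ≤ K.R^2 := sq_le_sq' hx.1 hx.2
  have hy2 : y^2 ≤ K.R^2 := sq_le_sq' hy.1 hy.2
  have hy0 : (0:ℝ) < 1 + y^2 := by positivity
  constructor
  · rw [div_le_div_iff₀ (by positivity) hy0]
    nlinarith [sq_nonneg x]
  · rw [div_le_iff₀ hy0]
    nlinarith [sq_nonneg y, sq_nonneg x]

end SchAux
end ConstsAux

noncomputable section QuantAux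
open MeasureTheory Set Real
namespace SchAux

variable {r : ℕ} {S : SchottkyData r}

def c1 (K : Consts S) : ℝ := K.G^2/((1+K.R^2)*((4*K.R^2)*(2*K.R)))
def c2 (K : Consts S) : ℝ := ((1+K.R^2)*(4*K.R^2))/(K.G^2*K.ℓ)
def eps (K : Consts S) : ℝ := K.θ*(K.G^2/(4*K.R^2))

lemma R_pos (K : Consts S) : 0 < K.R := lt_of_lt_of_le one_pos K.hR
lemma c1_pos (K : Consts S) : 0 < c1 K := by
  have := R_pos K; have := K.hG; unfold c1; positivity
lemma c2_pos (K : Consts S) : 0 < c2 K := by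
  have := R_pos K; have := K.hG; have := K.hl; unfold c2; positivity
lemma eps_pos (K : Consts S) : 0 < eps K := by
  have := R_pos K; have := K.hG; have := K.hθ; unfold eps; positivity

lemma sq_le_of_abs {a b : ℝ} (h : |a| ≤ b) : a^2 ≤ b^2 := by
  rw [← sq_abs]
  exact pow_le_pow_left₀ (abs_nonneg a) h 2

lemma le_sq_of_abs {a b : ℝ} (h : b ≤ |a|) (hb : 0 ≤ b) : b^2 ≤ a^2 := by
  calc b^2 ≤ |a|^2 := pow_le_pow_left₀ hb h 2
    _ = a^2 := sq_abs a

lemma derivB_bounds (K : Consts S) {l : List (Fin (2*r))} {b : Fin (2*r)}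
    (hl : l ≠ []) (hm : S.IsWord (l ++ [b])) :
    ∀ x ∈ Icc (S.ξ₀ b) (S.ξ₁ b),
      c1 K * ivlen (S.wordI (l ++ [b])) ≤ mobiusDerivB (S.wordγ l) x ∧
      mobiusDerivB (S.wordγ l) x ≤ c2 K * ivlen (S.wordI (l ++ [b])) := by
  intro x hx
  have hwl : S.IsWord l := isWord_of_snoc S hm
  have hc : (S.wordγ l) 1 0 ≠ 0 := word_c_ne S l hwl hl
  have hbq : b ≠ bar (l.getLast hl) := snoc_last_ne S hm hl
  have hpIcc : mobiusPole (S.wordγ l) ∈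
      Icc (S.ξ₀ (bar (l.getLast hl))) (S.ξ₁ (bar (l.getLast hl))) :=
    Ioo_subset_Icc_self (word_pole_mem S l hwl hl)
  have hpR : mobiusPole (S.wordγ l) ∈ Icc (-K.R) K.R := K.hsub _ hpIcc
  set g := S.wordγ l
  set p := mobiusPole g
  have huv : S.ξ₀ b ≤ S.ξ₁ b := (S.hlt b).le
  have hu : S.ξ₀ b ∈ Icc (S.ξ₀ b) (S.ξ₁ b) := ⟨le_refl _, huv⟩
  have hv : S.ξ₁ b ∈ Icc (S.ξ₀ b) (S.ξ₁ b) := ⟨huv, le_refl _⟩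
  set k := (g 1 0 : ℝ)^2 with hkdef
  have hk : 0 < k := by positivity
  have hkP : den g (S.ξ₀ b) * den g (S.ξ₁ b) = k * ((S.ξ₀ b - p)*(S.ξ₁ b - p)) := by
    rw [den_factor g hc, den_factor g hc]; ring
  have hkPpos : 0 < k * ((S.ξ₀ b - p)*(S.ξ₁ b - p)) := hkP ▸ snoc_den_pos S hm
  have hP0 : 0 < (S.ξ₀ b - p)*(S.ξ₁ b - p) := by
    by_contra hcon; push_neg at hcon
    nlinarith
  have hL : ivlen (S.wordI (l ++ [b])) =
      (S.ξ₁ b - S.ξ₀ b)/(k*((S.ξ₀ b - p)*(S.ξ₁ b - p))) := by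
    rw [wordI_snoc_ivlen S hm, hkP]
  have hxG : K.G ≤ |x - p| := K.hsep b _ hbq x hx p hpIcc
  have hQ1 : K.G^2 ≤ (x - p)^2 := le_sq_of_abs hxG K.hG.le
  have hQ2 : (x - p)^2 ≤ 4*K.R^2 := by
    have h := sq_le_of_abs (abs_sub_le_2R K (K.hsub b hx) hpR)
    calc (x-p)^2 ≤ (2*K.R)^2 := h
      _ = 4*K.R^2 := by ring
  have hP1 : K.G^2 ≤ (S.ξ₀ b - p)*(S.ξ₁ b - p) := P_lower K hbq hpIcc hu hv hP0
  have hP2 : (S.ξ₀ b - p)*(S.ξ₁ b - p) ≤ 4*K.R^2 :=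
    P_upper K (K.hsub b hu) (K.hsub b hv) hpR hP0
  have hw1 : K.ℓ ≤ S.ξ₁ b - S.ξ₀ b := K.hlb b
  have hw2 : S.ξ₁ b - S.ξ₀ b ≤ 2*K.R := by
    have h1 := K.hsub b hu; have h2 := K.hsub b hv
    linarith [h1.1, h2.2]
  have hgx : mobius g x ∈ Icc (-K.R) K.R := K.hsub _ (snoc_mem_head S hm hl x hx)
  have hball := ball_bounds K (K.hsub b hx) hgx
  have hBdef : mobiusDerivB g x = ((1 + x^2)/(1 + (mobius g x)^2)) * (k*((x - p)^2))⁻¹ := by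
    unfold mobiusDerivB mobiusDeriv
    rw [show (g 1 0 * x + g 1 1) = den g x from rfl, den_factor g hc, mul_pow]
  obtain ⟨hlow, hhigh⟩ := sandwich K.ℓ hk hP0 K.hG K.hR K.hl hQ1 hQ2 hP1 hP2 hw1 hw2
    hball.1 hball.2
  constructor
  · rw [hBdef, hL]; exact hlow
  · rw [hBdef, hL]; exact hhigh

lemma wordI_single (a : Fin (2*r)) : S.wordI [a] = Icc (S.ξ₀ a) (S.ξ₁ a) := by
  have h : ([] : List (Fin (2*r))) ++ [a] = [a] := rfl
  rw [← h, wordI_snoc, wordγ_nil]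
  rw [show mobius (1 : SL2) '' Icc (S.ξ₀ a) (S.ξ₁ a) = id '' Icc (S.ξ₀ a) (S.ξ₁ a) from
    Set.image_congr (fun x _ => mobius_one x), Set.image_id]

lemma ivlen_ratio_lb (K : Consts S) {l : List (Fin (2*r))} {b : Fin (2*r)}
    (hl : l ≠ []) (hm : S.IsWord (l ++ [b])) :
    eps K * ivlen (S.wordI l) ≤ ivlen (S.wordI (l ++ [b])) := by
  obtain ⟨l', a, rfl⟩ := concat_of_ne_nil hl
  have hwl : S.IsWord (l' ++ [a]) := isWord_of_snoc S hm
  have hba : b ≠ bar a := by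
    have := snoc_last_ne S hm hl
    rwa [getLast_snoc] at this
  have hbden : ∀ x ∈ Icc (S.ξ₀ b) (S.ξ₁ b), den (S.γ a) x ≠ 0 :=
    fun x hx => (letter_maps S a x (mem_Icc_not_Ioo S hba hx)).1
  have hbmem : ∀ x ∈ Icc (S.ξ₀ b) (S.ξ₁ b), mobius (S.γ a) x ∈ Icc (S.ξ₀ a) (S.ξ₁ a) :=
    fun x hx => (letter_maps S a x (mem_Icc_not_Ioo S hba hx)).2
  have huvb : S.ξ₀ b ≤ S.ξ₁ b := (S.hlt b).le
  have hub : S.ξ₀ b ∈ Icc (S.ξ₀ b) (S.ξ₁ b) := ⟨le_refl _, huvb⟩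
  have hvb : S.ξ₁ b ∈ Icc (S.ξ₀ b) (S.ξ₁ b) := ⟨huvb, le_refl _⟩
  set κ₀ := mobius (S.γ a) (S.ξ₀ b) with hκ₀
  set κ₁ := mobius (S.γ a) (S.ξ₁ b) with hκ₁
  have hκle : κ₀ ≤ κ₁ := mobius_le _ _ _ huvb hbden
  have hK : mobius (S.γ a) '' Icc (S.ξ₀ b) (S.ξ₁ b) = Icc κ₀ κ₁ :=
    mobius_image_Icc _ _ _ huvb hbden
  have hκ₀a : κ₀ ∈ Icc (S.ξ₀ a) (S.ξ₁ a) := hbmem _ hub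
  have hκ₁a : κ₁ ∈ Icc (S.ξ₀ a) (S.ξ₁ a) := hbmem _ hvb
  have hκsub : Icc κ₀ κ₁ ⊆ Icc (S.ξ₀ a) (S.ξ₁ a) := Set.Icc_subset_Icc hκ₀a.1 hκ₁a.2
  have hκlen : K.θ * (S.ξ₁ a - S.ξ₀ a) ≤ κ₁ - κ₀ := by
    have := K.hθlb a b hba
    rwa [hK, ivlen_Icc _ _ hκle] at this
  have hfrac1 : K.G^2/(4*K.R^2) ≤ 1 := by
    rw [div_le_one (by have := R_pos K; positivity)]
    have h := G_le_2R K
    nlinarith [K.hG]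
  have hlena : (0:ℝ) ≤ S.ξ₁ a - S.ξ₀ a := by linarith [S.hlt a]
  cases eq_or_ne l' [] with
  | inl h =>
    subst h
    have hIa : ivlen (S.wordI ([] ++ [a])) = S.ξ₁ a - S.ξ₀ a := by
      rw [show ([] : List (Fin (2*r))) ++ [a] = [a] from rfl, wordI_single,
        ivlen_Icc _ _ (S.hlt a).le]
    have hIab : ivlen (S.wordI (([] : List (Fin (2*r))) ++ [a] ++ [b])) = κ₁ - κ₀ := by
      rw [show ([] : List (Fin (2*r))) ++ [a] = [a] from rfl, wordI_snoc, wordγ_singleton,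
        hK, ivlen_Icc _ _ hκle]
    rw [hIa, hIab]
    calc eps K * (S.ξ₁ a - S.ξ₀ a) = (K.G^2/(4*K.R^2)) * (K.θ*(S.ξ₁ a - S.ξ₀ a)) := by
          unfold eps; ring
      _ ≤ 1 * (K.θ*(S.ξ₁ a - S.ξ₀ a)) :=
          mul_le_mul_of_nonneg_right hfrac1 (mul_nonneg K.hθ.le hlena)
      _ = K.θ*(S.ξ₁ a - S.ξ₀ a) := one_mul _
      _ ≤ κ₁ - κ₀ := hκlen
  | inr hl' =>
    have hwl' : S.IsWord l' := isWord_of_snoc S hwl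
    have hc' : (S.wordγ l') 1 0 ≠ 0 := word_c_ne S l' hwl' hl'
    have haa' : a ≠ bar (l'.getLast hl') := snoc_last_ne S hwl hl'
    have hpIcc : mobiusPole (S.wordγ l') ∈
        Icc (S.ξ₀ (bar (l'.getLast hl'))) (S.ξ₁ (bar (l'.getLast hl'))) :=
      Ioo_subset_Icc_self (word_pole_mem S l' hwl' hl')
    set g' := S.wordγ l'
    set p := mobiusPole g'
    set k := (g' 1 0 : ℝ)^2 with hkdef
    have hk : 0 < k := by positivity
    have hua : S.ξ₀ a ∈ Icc (S.ξ₀ a) (S.ξ₁ a) := ⟨le_refl _, (S.hlt a).le⟩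
    have hva : S.ξ₁ a ∈ Icc (S.ξ₀ a) (S.ξ₁ a) := ⟨(S.hlt a).le, le_refl _⟩
    have hkPa : den g' (S.ξ₀ a) * den g' (S.ξ₁ a) = k * ((S.ξ₀ a - p)*(S.ξ₁ a - p)) := by
      rw [den_factor g' hc', den_factor g' hc']; ring
    have hkPapos : 0 < k * ((S.ξ₀ a - p)*(S.ξ₁ a - p)) := hkPa ▸ snoc_den_pos S hwl
    have hPa0 : 0 < (S.ξ₀ a - p)*(S.ξ₁ a - p) := by
      by_contra hcon; push_neg at hcon; nlinarith
    have hIl : ivlen (S.wordI (l' ++ [a])) =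
        (S.ξ₁ a - S.ξ₀ a)/(k*((S.ξ₀ a - p)*(S.ξ₁ a - p))) := by
      rw [wordI_snoc_ivlen S hwl, hkPa]
    have hden' : ∀ y ∈ Icc κ₀ κ₁, den g' y ≠ 0 := fun y hy => snoc_den S hwl y (hκsub hy)
    have hchild : S.wordI (l' ++ [a] ++ [b]) = mobius g' '' Icc κ₀ κ₁ := by
      rw [wordI_snoc S (l' ++ [a]) b, ← hK, Set.image_image]
      apply Set.image_congr
      intro x hx
      rw [wordγ_snoc, mobius_comp _ _ _ (hbden x hx) (snoc_den S hwl _ (hbmem x hx))]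
    have hkPK : den g' κ₀ * den g' κ₁ = k * ((κ₀ - p)*(κ₁ - p)) := by
      rw [den_factor g' hc', den_factor g' hc']; ring
    have hkPKpos : 0 < k * ((κ₀ - p)*(κ₁ - p)) := hkPK ▸
      den_same_sign g' κ₀ κ₁ hden' ⟨le_refl _, hκle⟩ ⟨hκle, le_refl _⟩
    have hPK0 : 0 < (κ₀ - p)*(κ₁ - p) := by
      by_contra hcon; push_neg at hcon; nlinarith
    have hIlb : ivlen (S.wordI (l' ++ [a] ++ [b])) =
        (κ₁ - κ₀)/(k*((κ₀ - p)*(κ₁ - p))) := by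
      rw [hchild, mobius_ivlen g' κ₀ κ₁ hκle hden', hkPK]
    have hPa1 : K.G^2 ≤ (S.ξ₀ a - p)*(S.ξ₁ a - p) := P_lower K haa' hpIcc hua hva hPa0
    have hPK2 : (κ₀ - p)*(κ₁ - p) ≤ 4*K.R^2 :=
      P_upper K (K.hsub a hκ₀a) (K.hsub a hκ₁a) (K.hsub _ hpIcc) hPK0
    rw [hIl, hIlb]
    exact ratio_aux hk hPa0 hPK0 K.hG (R_pos K) (by linarith [S.hlt a]) K.hθ hκlen hPa1 hPK2

end SchAux
end QuantAux

noncomputable section DecayAux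
open MeasureTheory Set Real
namespace SchAux

variable {r : ℕ} {S : SchottkyData r}

lemma theta_le_one (K : Consts S) : K.θ ≤ 1 := by
  set a : Fin (2*r) := ⟨0, fin_nonempty S⟩
  obtain ⟨b, hb, -⟩ := exists_third S (bar a) (bar a)
  have h1 := K.hθlb a b hb
  have hsub : mobius (S.γ a) '' Icc (S.ξ₀ b) (S.ξ₁ b) ⊆ Icc (S.ξ₀ a) (S.ξ₁ a) := by
    rintro _ ⟨x, hx, rfl⟩
    exact (letter_maps S a x (mem_Icc_not_Ioo S hb hx)).2
  have h2 : ivlen (mobius (S.γ a) '' Icc (S.ξ₀ b) (S.ξ₁ b)) ≤ S.ξ₁ a - S.ξ₀ a := by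
    have := ivlen_mono_Icc _ _ _ hsub
    rwa [ivlen_Icc _ _ (S.hlt a).le] at this
  have hlen : 0 < S.ξ₁ a - S.ξ₀ a := by linarith [S.hlt a]
  nlinarith

lemma eps_le_one (K : Consts S) : eps K ≤ 1 := by
  have hfrac1 : K.G^2/(4*K.R^2) ≤ 1 := by
    rw [div_le_one (by have := R_pos K; positivity)]
    nlinarith [G_le_2R K, K.hG]
  have hfrac0 : 0 < K.G^2/(4*K.R^2) := by have := R_pos K; have := K.hG; positivity
  unfold eps
  nlinarith [theta_le_one K, K.hθ]

lemma wordI_measurable (m : List (Fin (2*r))) (hm : S.IsWord m) (hne : m ≠ []) :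
    MeasurableSet (S.wordI m) := by
  obtain ⟨A, B, -, hIcc⟩ := wordI_isIcc S m hm hne
  rw [hIcc]; exact measurableSet_Icc

lemma ivlen_ratio_ub (K : Consts S) {l : List (Fin (2*r))} {b : Fin (2*r)}
    (hl : l ≠ []) (hm : S.IsWord (l ++ [b])) :
    ivlen (S.wordI (l ++ [b])) ≤ (1 - eps K) * ivlen (S.wordI l) := by
  obtain ⟨b', hb'b, hb'bar⟩ := exists_third S b (bar (l.getLast hl))
  have hm' : S.IsWord (l ++ [b']) :=
    (isWord_snoc_iff S l b').2 ⟨isWord_of_snoc S hm, fun hne => hb'bar⟩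
  obtain ⟨A, B, hAB, hIcc⟩ := wordI_isIcc S l (isWord_of_snoc S hm) hl
  have h1 : S.wordI (l ++ [b]) ⊆ Icc A B := hIcc ▸ wordI_nest S hl hm
  have h2 : S.wordI (l ++ [b']) ⊆ Icc A B := hIcc ▸ wordI_nest S hl hm'
  have hmB : MeasurableSet (S.wordI (l ++ [b'])) :=
    wordI_measurable _ hm' (by simp)
  have hdisj : Disjoint (S.wordI (l ++ [b])) (S.wordI (l ++ [b'])) :=
    word_pair_disjoint S hm hm' (fun h => hb'b h.symm)
  have key := ivlen_disj_add _ _ A B h1 h2 hmB hdisj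
  rw [← hIcc] at key
  have hlb' := ivlen_ratio_lb K hl hm'
  linarith

lemma wordI_ivlen_pos' (m : List (Fin (2*r))) (hm : S.IsWord m) (hne : m ≠ []) :
    0 < ivlen (S.wordI m) := by
  obtain ⟨l, b, rfl⟩ := concat_of_ne_nil hne
  exact wordI_ivlen_pos S hm

lemma ivlen_le_2R (K : Consts S) (m : List (Fin (2*r))) (hm : S.IsWord m) (hne : m ≠ []) :
    ivlen (S.wordI m) ≤ 2*K.R := by
  have hsub : S.wordI m ⊆ Icc (-K.R) K.R :=
    (wordI_sub_head S hm hne).trans (K.hsub _)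
  have := ivlen_mono_Icc _ _ _ hsub
  rwa [ivlen_Icc _ _ (by linarith [R_pos K]), show K.R - -K.R = 2*K.R by ring] at this

lemma wordI_decay (K : Consts S) (m : List (Fin (2*r))) (hm : S.IsWord m) (hne : m ≠ []) :
    ivlen (S.wordI m) ≤ (2*K.R) * (1 - eps K)^(m.length - 1) := by
  have heps0 : 0 ≤ 1 - eps K := by linarith [eps_le_one K]
  induction m using List.reverseRecOn with
  | nil => exact absurd rfl hne
  | append_singleton l b ih =>
    cases eq_or_ne l [] with
    | inl h =>
      subst h
      simp only [List.nil_append, List.length_singleton]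
      norm_num
      exact ivlen_le_2R K [b] hm (by simp)
    | inr hl =>
      have hwl : S.IsWord l := isWord_of_snoc S hm
      have hlen : 1 ≤ l.length := List.length_pos_iff.2 hl
      have hstep := ivlen_ratio_ub K hl hm
      have hih := ih hwl hl
      calc ivlen (S.wordI (l ++ [b])) ≤ (1 - eps K) * ivlen (S.wordI l) := hstep
        _ ≤ (1 - eps K) * ((2*K.R) * (1 - eps K)^(l.length - 1)) :=
            mul_le_mul_of_nonneg_left hih heps0
        _ = (2*K.R) * ((1 - eps K)^(l.length - 1) * (1 - eps K)) := by ring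
        _ = (2*K.R) * (1 - eps K)^(l.length - 1 + 1) := by rw [pow_succ]
        _ = (2*K.R) * (1 - eps K)^((l ++ [b]).length - 1) := by
            congr 2
            simp
            omega

end SchAux
end DecayAux

noncomputable section MeasureAux
open MeasureTheory Set Real
namespace SchAux

lemma setIntegral_bounds (μ : Measure ℝ) [IsProbabilityMeasure μ] (s : Set ℝ)
    (hs : MeasurableSet s) (f : ℝ → ℝ) (hf : Measurable f) (c C : ℝ)
    (h1 : ∀ x ∈ s, c ≤ f x) (h2 : ∀ x ∈ s, f x ≤ C) :
    c * (μ s).toReal ≤ ∫ x in s, f x ∂μ ∧ ∫ x in s, f x ∂μ ≤ C * (μ s).toReal := by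
  have hfin : μ s ≠ ⊤ := measure_ne_top μ s
  have hint : IntegrableOn f s μ := by
    apply Measure.integrableOn_of_bounded hfin hf.aestronglyMeasurable (M := |c| + |C|)
    filter_upwards [ae_restrict_mem hs] with x hx
    rw [Real.norm_eq_abs, abs_le]
    have := h1 x hx; have := h2 x hx
    constructor <;> nlinarith [le_abs_self C, neg_abs_le c, abs_nonneg c, abs_nonneg C]
  constructor
  · calc c * (μ s).toReal = ∫ _ in s, c ∂μ := by rw [setIntegral_const, measureReal_def, smul_eq_mul, mul_comm]
      _ ≤ ∫ x in s, f x ∂μ :=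
        setIntegral_mono_on (integrableOn_const hfin) hint hs h1
  · calc ∫ x in s, f x ∂μ ≤ ∫ _ in s, C ∂μ :=
        setIntegral_mono_on hint (integrableOn_const hfin) hs h2
      _ = C * (μ s).toReal := by rw [setIntegral_const, measureReal_def, smul_eq_mul, mul_comm]

variable {r : ℕ} {S : SchottkyData r}

lemma shadow (K : Consts S) {δ : ℝ} (hδ0 : 0 < δ) (μ : Measure ℝ) (hμ : S.IsPS δ μ)
    {l : List (Fin (2*r))} {b : Fin (2*r)} (hl : l ≠ []) (hm : S.IsWord (l ++ [b])) :
    (c1 K * ivlen (S.wordI (l ++ [b])))^δ * (μ (Icc (S.ξ₀ b) (S.ξ₁ b))).toReal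
      ≤ (μ (S.wordI (l ++ [b]))).toReal ∧
    (μ (S.wordI (l ++ [b]))).toReal
      ≤ (c2 K * ivlen (S.wordI (l ++ [b])))^δ * (μ (Icc (S.ξ₀ b) (S.ξ₁ b))).toReal := by
  have hprob : IsProbabilityMeasure μ := hμ.1
  have hImeas : MeasurableSet (S.wordI (l ++ [b])) := wordI_measurable (l++[b]) hm (by simp)
  have hbmeas : MeasurableSet (Icc (S.ξ₀ b) (S.ξ₁ b)) := measurableSet_Icc
  set g := S.wordγ l with hg
  have hBmeas : Measurable (fun x => mobiusDerivB g x ^ δ) := by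
    unfold mobiusDerivB mobiusDeriv mobius; fun_prop
  set f := (S.wordI (l ++ [b])).indicator (fun _ => (1:ℝ)) with hf
  have hfm : Measurable f := measurable_const.indicator hImeas
  have hfb : ∃ C, ∀ x, |f x| ≤ C := by
    classical
    refine ⟨1, fun x => ?_⟩
    rw [hf, Set.indicator_apply]
    split_ifs <;> norm_num
  have hkey := hμ.2.2 g (wordγ_mem_closure S l) f hfm hfb
  have hLHS : ∫ x, f x ∂μ = (μ (S.wordI (l ++ [b]))).toReal := integral_indicator_one hImeas
  have hptwise : ∀ x, f (mobius g x) * mobiusDerivB g x ^ δ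
      = (Icc (S.ξ₀ b) (S.ξ₁ b)).indicator (fun x => mobiusDerivB g x ^ δ) x := by
    intro x
    by_cases hden : den g x = 0
    · have hB0 : mobiusDerivB g x = 0 := by
        unfold mobiusDerivB mobiusDeriv
        rw [show g 1 0 * x + g 1 1 = den g x from rfl, hden]
        norm_num
      rw [hB0, Real.zero_rpow hδ0.ne', mul_zero, Set.indicator_apply]
      split_ifs with h
      · rw [hB0, Real.zero_rpow hδ0.ne']
      · rfl
    · by_cases hxI : x ∈ Icc (S.ξ₀ b) (S.ξ₁ b)
      · rw [Set.indicator_of_mem hxI]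
        have hmem : mobius g x ∈ S.wordI (l ++ [b]) := by
          rw [wordI_snoc]; exact ⟨x, hxI, rfl⟩
        rw [hf, Set.indicator_of_mem hmem, one_mul]
      · rw [Set.indicator_of_notMem hxI]
        have hnmem : mobius g x ∉ S.wordI (l ++ [b]) := by
          rw [wordI_snoc]
          rintro ⟨y, hy, hxy⟩
          exact hxI (mobius_inj g y x (snoc_den S hm y hy) hden hxy ▸ hy)
        rw [hf, Set.indicator_of_notMem hnmem, zero_mul]
  have hRHS : ∫ x, f (mobius g x) * mobiusDerivB g x ^ δ ∂μ
      = ∫ x in Icc (S.ξ₀ b) (S.ξ₁ b), mobiusDerivB g x ^ δ ∂μ := by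
    calc ∫ x, f (mobius g x) * mobiusDerivB g x ^ δ ∂μ
        = ∫ x, (Icc (S.ξ₀ b) (S.ξ₁ b)).indicator (fun x => mobiusDerivB g x ^ δ) x ∂μ := by
          congr 1; funext x; exact hptwise x
      _ = _ := integral_indicator hbmeas
  have hLpos : 0 < ivlen (S.wordI (l ++ [b])) := wordI_ivlen_pos S hm
  have hbd := derivB_bounds K hl hm
  have hc1L : 0 < c1 K * ivlen (S.wordI (l ++ [b])) := mul_pos (c1_pos K) hLpos
  have hbounds := setIntegral_bounds μ _ hbmeas _ hBmeas
    ((c1 K * ivlen (S.wordI (l ++ [b])))^δ) ((c2 K * ivlen (S.wordI (l ++ [b])))^δ)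
    (fun x hx => Real.rpow_le_rpow hc1L.le (hbd x hx).1 hδ0.le)
    (fun x hx => Real.rpow_le_rpow (le_trans hc1L.le (hbd x hx).1) (hbd x hx).2 hδ0.le)
  rw [hLHS, hRHS] at hkey
  rw [hkey]
  exact hbounds

lemma bar_bar {r : ℕ} (a : Fin (2*r)) : bar (bar a) = a := by
  have ha := a.isLt
  unfold bar
  rcases lt_or_ge (a : ℕ) r with h | h
  · rw [dif_pos h]
    have h2 : ¬ (((⟨(a:ℕ)+r, by omega⟩ : Fin (2*r)) : ℕ) < r) := by simp
    rw [dif_neg h2]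
    apply Fin.ext; simp
  · rw [dif_neg (not_lt.2 h)]
    have h2 : ((⟨(a:ℕ)-r, by omega⟩ : Fin (2*r)) : ℕ) < r := by simp; omega
    rw [dif_pos h2]
    apply Fin.ext; simp; omega

lemma ne_bar_of_ne_bar {r : ℕ} {a c : Fin (2*r)} (h : c ≠ bar a) : a ≠ bar c := by
  intro heq
  exact h (by rw [heq, bar_bar])

lemma limitSet_subset_base : S.limitSet ⊆ ⋃ b, Icc (S.ξ₀ b) (S.ξ₁ b) := by
  intro x hx
  have h0 := Set.mem_iInter.1 hx 0
  obtain ⟨l, hl⟩ := Set.mem_iUnion.1 h0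
  obtain ⟨⟨hword, hlen⟩, hxl⟩ := Set.mem_iUnion.1 hl
  obtain ⟨a, rfl⟩ := List.length_eq_one_iff.1 hlen
  rw [wordI_single] at hxl
  exact Set.mem_iUnion.2 ⟨a, hxl⟩

lemma exists_base_pos (μ : Measure ℝ) {δ : ℝ} (hμ : S.IsPS δ μ) :
    ∃ a, 0 < μ (Icc (S.ξ₀ a) (S.ξ₁ a)) := by
  have hprob : IsProbabilityMeasure μ := hμ.1
  by_contra h
  push_neg at h
  have h0 : ∀ a, μ (Icc (S.ξ₀ a) (S.ξ₁ a)) = 0 := fun a => nonpos_iff_eq_zero.1 (h a)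
  have h1 : μ (⋃ b, Icc (S.ξ₀ b) (S.ξ₁ b)) = 0 := measure_iUnion_null h0
  have h2 : μ S.limitSet = 0 := measure_mono_null limitSet_subset_base h1
  have h3 := measure_union_le (μ := μ) S.limitSet S.limitSetᶜ
  rw [Set.union_compl_self, h2, hμ.2.1, measure_univ] at h3
  simp at h3

lemma base_pos (K : Consts S) {δ : ℝ} (hδ0 : 0 < δ) (μ : Measure ℝ) (hμ : S.IsPS δ μ) :
    ∃ m₀ > (0:ℝ), ∀ b, m₀ ≤ (μ (Icc (S.ξ₀ b) (S.ξ₁ b))).toReal := by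
  have hprob : IsProbabilityMeasure μ := hμ.1
  obtain ⟨a₀, ha₀⟩ := exists_base_pos μ hμ
  have ha₀' : 0 < (μ (Icc (S.ξ₀ a₀) (S.ξ₁ a₀))).toReal :=
    ENNReal.toReal_pos ha₀.ne' (measure_ne_top μ _)
  have hpos : ∀ b, 0 < (μ (Icc (S.ξ₀ b) (S.ξ₁ b))).toReal := by
    intro b
    have key : ∃ l : List (Fin (2*r)), ∃ hl : l ≠ [], S.IsWord (l ++ [a₀]) ∧
        l.head hl = b := by
      rcases eq_or_ne a₀ (bar b) with heq | hne
      · obtain ⟨c, hcb, hca⟩ := exists_third S (bar b) (bar a₀)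
        refine ⟨[b, c], by simp, ?_, rfl⟩
        have h1 : c ≠ bar b := hcb
        have h2 : a₀ ≠ bar c := ne_bar_of_ne_bar hca
        exact List.isChain_cons_cons.2 ⟨h1, List.isChain_cons_cons.2 ⟨h2, List.isChain_singleton _⟩⟩
      · exact ⟨[b], by simp, isWord_pair S hne, rfl⟩
    obtain ⟨l, hlne, hword, hhead⟩ := key
    have hsh := (shadow K hδ0 μ hμ hlne hword).1
    have hLpos : 0 < ivlen (S.wordI (l ++ [a₀])) := wordI_ivlen_pos S hword
    have hlow : 0 < (μ (S.wordI (l ++ [a₀]))).toReal := by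
      have h1 : 0 < (c1 K * ivlen (S.wordI (l ++ [a₀])))^δ :=
        Real.rpow_pos_of_pos (mul_pos (c1_pos K) hLpos) δ
      nlinarith
    have hsub : S.wordI (l ++ [a₀]) ⊆ Icc (S.ξ₀ b) (S.ξ₁ b) := by
      have hpre : [l.head hlne] <+: l ++ [a₀] := by
        have h1 : [l.head hlne] <+: l :=
          ⟨l.tail, by rw [List.singleton_append, List.cons_head_tail]⟩
        exact h1.trans (List.prefix_append l [a₀])
      have := wordI_prefix_sub S (l ++ [a₀]) hword (by simp) hpre
      rwa [wordI_single, hhead] at this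
    have hmono : (μ (S.wordI (l ++ [a₀]))).toReal ≤ (μ (Icc (S.ξ₀ b) (S.ξ₁ b))).toReal :=
      ENNReal.toReal_mono (measure_ne_top μ _) (measure_mono hsub)
    linarith
  have : Nonempty (Fin (2*r)) := ⟨⟨0, fin_nonempty S⟩⟩
  exact exists_pos_lb _ hpos

end SchAux
end MeasureAux

noncomputable section ZpartAux
open MeasureTheory Set Real
namespace SchAux

variable {r : ℕ} {S : SchottkyData r}

lemma to_Zpart {τ : ℝ} (l : List (Fin (2*r))) :
    S.IsWord l → l ≠ [] → ivlen (S.wordI l) ≤ τ →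
    ∀ x ∈ S.wordI l, ∃ m ∈ S.Zpart τ, x ∈ S.wordI m := by
  induction l using List.reverseRecOn with
  | nil => intro _ h; exact absurd rfl h
  | append_singleton l' b ih =>
    intro hword _ hlen x hx
    by_cases hcase : l' = [] ∨ τ < ivlen (S.wordI l')
    · refine ⟨l' ++ [b], ⟨hword, by simp, hlen, ?_⟩, hx⟩
      have hdrop : (l' ++ [b]).dropLast = l' := by simp
      rw [hdrop]
      exact hcase
    · push_neg at hcase
      obtain ⟨hl'ne, hl'len⟩ := hcase
      exact ih (isWord_of_snoc S hword) hl'ne hl'len x (wordI_nest S hl'ne hword hx)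

lemma Zpart_cover (K : Consts S) {τ : ℝ} (hτ0 : 0 < τ) :
    S.limitSet ⊆ ⋃ m ∈ S.Zpart τ, S.wordI m := by
  intro x hx
  have heps1 := eps_le_one K
  have heps0 := eps_pos K
  have hR := R_pos K
  obtain ⟨n, hn⟩ := exists_pow_lt_of_lt_one
    (show (0:ℝ) < τ/(2*K.R) by positivity) (show 1 - eps K < 1 by linarith)
  have hxn := Set.mem_iInter.1 hx n
  obtain ⟨l, hl⟩ := Set.mem_iUnion.1 hxn
  obtain ⟨⟨hword, hlen⟩, hxl⟩ := Set.mem_iUnion.1 hl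
  have hne : l ≠ [] := List.ne_nil_of_length_pos (by omega)
  have hlen' : ivlen (S.wordI l) ≤ τ := by
    have h1 := wordI_decay K l hword hne
    have h2 : l.length - 1 = n := by omega
    rw [h2] at h1
    have h3 : (2*K.R) * (1 - eps K)^n < τ := by
      rw [lt_div_iff₀ (by positivity : (0:ℝ) < 2*K.R)] at hn
      linarith
    linarith
  obtain ⟨m, hm, hxm⟩ := to_Zpart l hword hne hlen' x hxl
  exact Set.mem_biUnion hm hxm

lemma Zpart_isWord {τ : ℝ} {m : List (Fin (2*r))} (hm : m ∈ S.Zpart τ) : S.IsWord m := hm.1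
lemma Zpart_ne_nil {τ : ℝ} {m : List (Fin (2*r))} (hm : m ∈ S.Zpart τ) : m ≠ [] := hm.2.1

lemma Zpart_not_prefix {τ : ℝ} {m m' : List (Fin (2*r))} (hm : m ∈ S.Zpart τ)
    (hm' : m' ∈ S.Zpart τ) (hne : m ≠ m') : ¬ m <+: m' := by
  intro hpre
  obtain ⟨hw, hne0, hlen, -⟩ := hm
  obtain ⟨hw', hne0', hlen', hdrop'⟩ := hm'
  have hdecomp : m'.dropLast ++ [m'.getLast hne0'] = m' := List.dropLast_append_getLast hne0'
  have hproper : m <+: m'.dropLast := by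
    rw [← hdecomp] at hpre
    rcases List.prefix_concat_iff.1 hpre with h | h
    · exact absurd (h.trans hdecomp) hne
    · exact h
  have hddne : m'.dropLast ≠ [] := by
    intro h
    exact hne0 (List.prefix_nil.1 (h ▸ hproper))
  have hdw : S.IsWord m'.dropLast := List.IsChain.prefix hw' (List.dropLast_prefix m')
  have hmono : ivlen (S.wordI m'.dropLast) ≤ ivlen (S.wordI m) :=
    wordI_ivlen_mono S m'.dropLast m hdw hw hne0 hproper
  rcases hdrop' with h | h
  · exact hddne h
  · have hid : (MeasureTheory.volume (S.wordI m'.dropLast)).toReal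
        = ivlen (S.wordI m'.dropLast) := rfl
    rw [hid] at h
    have hid2 : (MeasureTheory.volume (S.wordI m)).toReal = ivlen (S.wordI m) := rfl
    rw [hid2] at hlen
    linarith

lemma Zpart_disjoint {τ : ℝ} {m m' : List (Fin (2*r))} (hm : m ∈ S.Zpart τ)
    (hm' : m' ∈ S.Zpart τ) (hne : m ≠ m') : Disjoint (S.wordI m) (S.wordI m') :=
  word_incomp_disjoint S m m' (Zpart_isWord hm) (Zpart_isWord hm') (Zpart_ne_nil hm)
    (Zpart_ne_nil hm') (Zpart_not_prefix hm hm' hne) (Zpart_not_prefix hm' hm hne.symm)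

lemma Zpart_finite (K : Consts S) {τ : ℝ} (hτ0 : 0 < τ) : (S.Zpart τ).Finite := by
  have heps1 := eps_le_one K
  have heps0 := eps_pos K
  have hR := R_pos K
  obtain ⟨n₀, hn₀⟩ := exists_pow_lt_of_lt_one
    (show (0:ℝ) < τ/(2*K.R) by positivity) (show 1 - eps K < 1 by linarith)
  apply Set.Finite.subset (List.finite_length_le (Fin (2*r)) (n₀+2))
  intro m hm
  obtain ⟨hw, hne, -, hdrop⟩ := hm
  simp only [Set.mem_setOf_eq]
  by_contra hbig
  push_neg at hbig
  have hdlen : m.dropLast.length = m.length - 1 := List.length_dropLast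
  have hddne : m.dropLast ≠ [] := by
    intro h
    rw [h] at hdlen
    simp at hdlen
    omega
  rcases hdrop with h | h
  · exact hddne h
  · have hdw : S.IsWord m.dropLast := List.IsChain.prefix hw (List.dropLast_prefix m)
    have hdecay := wordI_decay K m.dropLast hdw hddne
    have hmn : n₀ ≤ m.dropLast.length - 1 := by omega
    have hpow : (1 - eps K)^(m.dropLast.length - 1) ≤ (1 - eps K)^n₀ :=
      pow_le_pow_of_le_one (by linarith) (by linarith) hmn
    have h3 : (2*K.R) * (1 - eps K)^n₀ < τ := by
      rw [lt_div_iff₀ (by positivity : (0:ℝ) < 2*K.R)] at hn₀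
      linarith
    have hid : (MeasureTheory.volume (S.wordI m.dropLast)).toReal
        = ivlen (S.wordI m.dropLast) := rfl
    rw [hid] at h
    nlinarith

end SchAux
end ZpartAux

noncomputable section FinalAux
open MeasureTheory Set Real
namespace SchAux

variable {r : ℕ} {S : SchottkyData r}

lemma toReal_le_one (μ : Measure ℝ) [IsProbabilityMeasure μ] (X : Set ℝ) :
    (μ X).toReal ≤ 1 := by
  calc (μ X).toReal ≤ (μ Set.univ).toReal :=
        ENNReal.toReal_mono (measure_ne_top μ _) (measure_mono (Set.subset_univ X))
    _ = 1 := by rw [measure_univ]; rfl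

lemma Zpart_measure_bounds (K : Consts S) {δ : ℝ} (hδ0 : 0 < δ) (μ : Measure ℝ)
    (hμ : S.IsPS δ μ) (m₀ : ℝ) (hm₀ : 0 < m₀)
    (hm₀b : ∀ b, m₀ ≤ (μ (Icc (S.ξ₀ b) (S.ξ₁ b))).toReal)
    {τ : ℝ} (hτ0 : 0 < τ) (hτ1 : τ ≤ 1) {m : List (Fin (2*r))} (hm : m ∈ S.Zpart τ) :
    (min m₀ ((c1 K * eps K)^δ * m₀)) * τ^δ ≤ (μ (S.wordI m)).toReal ∧
    (μ (S.wordI m)).toReal ≤ (max (((min K.ℓ 1))^δ)⁻¹ ((c2 K)^δ)) * τ^δ := by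
  have hprob : IsProbabilityMeasure μ := hμ.1
  obtain ⟨hw, hne, hlen, hdrop⟩ := hm
  have hTpos : 0 < τ^δ := Real.rpow_pos_of_pos hτ0 δ
  have hT1 : τ^δ ≤ 1 := Real.rpow_le_one hτ0.le hτ1 hδ0.le
  have hlen' : ivlen (S.wordI m) ≤ τ := hlen
  have hdec : m.dropLast ++ [m.getLast hne] = m := List.dropLast_append_getLast hne
  cases eq_or_ne m.dropLast [] with
  | inl hl0 =>
    have hmeq : m = [m.getLast hne] := by
      have h := hdec
      rw [hl0, List.nil_append] at h
      exact h.symm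
    set b := m.getLast hne
    have hIb : S.wordI m = Icc (S.ξ₀ b) (S.ξ₁ b) := by rw [hmeq, wordI_single]
    rw [hIb]
    constructor
    · calc (min m₀ ((c1 K * eps K)^δ * m₀)) * τ^δ ≤ m₀ * τ^δ :=
            mul_le_mul_of_nonneg_right (min_le_left _ _) hTpos.le
        _ ≤ m₀ * 1 := mul_le_mul_of_nonneg_left hT1 hm₀.le
        _ = m₀ := mul_one _
        _ ≤ _ := hm₀b b
    · have hlb : K.ℓ ≤ ivlen (S.wordI m) := by
        rw [hIb, ivlen_Icc _ _ (S.hlt b).le]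
        exact K.hlb b
      have hℓ'pos : 0 < min K.ℓ 1 := lt_min K.hl one_pos
      have hℓ'τ : min K.ℓ 1 ≤ τ := le_trans (min_le_left _ _) (by linarith)
      have h1 : (min K.ℓ 1)^δ ≤ τ^δ := Real.rpow_le_rpow hℓ'pos.le hℓ'τ hδ0.le
      have h2 : 0 < (min K.ℓ 1)^δ := Real.rpow_pos_of_pos hℓ'pos δ
      calc (μ (Icc (S.ξ₀ b) (S.ξ₁ b))).toReal ≤ 1 := toReal_le_one μ _
        _ ≤ ((min K.ℓ 1)^δ)⁻¹ * τ^δ := by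
            rw [← div_eq_inv_mul, le_div_iff₀ h2]
            linarith
        _ ≤ (max (((min K.ℓ 1))^δ)⁻¹ ((c2 K)^δ)) * τ^δ :=
            mul_le_mul_of_nonneg_right (le_max_left _ _) hTpos.le
  | inr hl0 =>
    rw [← hdec] at hw hlen' ⊢
    set l := m.dropLast with hldef
    set b := m.getLast hne
    have hsh := shadow K hδ0 μ hμ hl0 hw
    have hLpos : 0 < ivlen (S.wordI (l ++ [b])) := wordI_ivlen_pos S hw
    have hτl : τ < ivlen (S.wordI l) := by
      rcases hdrop with h | h
      · exact absurd h hl0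
      · exact h
    have hLlb : eps K * τ ≤ ivlen (S.wordI (l ++ [b])) := by
      have h1 := ivlen_ratio_lb K hl0 hw
      have h2 : eps K * τ ≤ eps K * ivlen (S.wordI l) :=
        mul_le_mul_of_nonneg_left hτl.le (eps_pos K).le
      linarith
    have hmub : (μ (Icc (S.ξ₀ b) (S.ξ₁ b))).toReal ≤ 1 := toReal_le_one μ _
    have hmlb : m₀ ≤ (μ (Icc (S.ξ₀ b) (S.ξ₁ b))).toReal := hm₀b b
    constructor
    · have h1 : (c1 K * eps K) * τ ≤ c1 K * ivlen (S.wordI (l ++ [b])) := by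
        have := mul_le_mul_of_nonneg_left hLlb (c1_pos K).le
        calc (c1 K * eps K) * τ = c1 K * (eps K * τ) := by ring
          _ ≤ c1 K * ivlen (S.wordI (l ++ [b])) := this
      have h2 : ((c1 K * eps K) * τ)^δ ≤ (c1 K * ivlen (S.wordI (l ++ [b])))^δ :=
        Real.rpow_le_rpow (mul_pos (mul_pos (c1_pos K) (eps_pos K)) hτ0).le h1 hδ0.le
      have h3 : ((c1 K * eps K) * τ)^δ = (c1 K * eps K)^δ * τ^δ :=
        Real.mul_rpow (mul_pos (c1_pos K) (eps_pos K)).le hτ0.le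
      calc (min m₀ ((c1 K * eps K)^δ * m₀)) * τ^δ ≤ ((c1 K * eps K)^δ * m₀) * τ^δ :=
            mul_le_mul_of_nonneg_right (min_le_right _ _) hTpos.le
        _ = ((c1 K * eps K)^δ * τ^δ) * m₀ := by ring
        _ = ((c1 K * eps K) * τ)^δ * m₀ := by rw [h3]
        _ ≤ (c1 K * ivlen (S.wordI (l ++ [b])))^δ * m₀ :=
            mul_le_mul_of_nonneg_right h2 hm₀.le
        _ ≤ (c1 K * ivlen (S.wordI (l ++ [b])))^δ * (μ (Icc (S.ξ₀ b) (S.ξ₁ b))).toReal :=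
            mul_le_mul_of_nonneg_left hmlb (Real.rpow_nonneg (mul_pos (c1_pos K) hLpos).le δ)
        _ ≤ _ := hsh.1
    · have h1 : c2 K * ivlen (S.wordI (l ++ [b])) ≤ c2 K * τ :=
        mul_le_mul_of_nonneg_left hlen' (c2_pos K).le
      have h2 : (c2 K * ivlen (S.wordI (l ++ [b])))^δ ≤ (c2 K * τ)^δ :=
        Real.rpow_le_rpow (mul_pos (c2_pos K) hLpos).le h1 hδ0.le
      have h3 : (c2 K * τ)^δ = (c2 K)^δ * τ^δ := Real.mul_rpow (c2_pos K).le hτ0.le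
      calc (μ (S.wordI (l ++ [b]))).toReal
          ≤ (c2 K * ivlen (S.wordI (l ++ [b])))^δ * (μ (Icc (S.ξ₀ b) (S.ξ₁ b))).toReal := hsh.2
        _ ≤ (c2 K * ivlen (S.wordI (l ++ [b])))^δ * 1 :=
            mul_le_mul_of_nonneg_left hmub (Real.rpow_nonneg (mul_pos (c2_pos K) hLpos).le δ)
        _ = (c2 K * ivlen (S.wordI (l ++ [b])))^δ := mul_one _
        _ ≤ (c2 K * τ)^δ := h2
        _ = (c2 K)^δ * τ^δ := h3
        _ ≤ (max (((min K.ℓ 1))^δ)⁻¹ ((c2 K)^δ)) * τ^δ :=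
            mul_le_mul_of_nonneg_right (le_max_right _ _) hTpos.le

end SchAux
end FinalAux

noncomputable section

open MeasureTheory Set Real

/-- **Cardinality of the partition `Z(τ)`:** there is `C_Γ > 0` depending only on the
Schottky data such that `C_Γ⁻¹ τ^{-δ} ≤ #Z(τ) ≤ C_Γ τ^{-δ}` for every `τ ∈ (0,1]`. -/
theorem partition_count (r : ℕ) (S : SchottkyData r) (δ : ℝ)
    (hδ0 : 0 < δ) (hδ1 : δ < 1) (μ : Measure ℝ) (hμ : S.IsPS δ μ) :
    ∃ C > (0 : ℝ), ∀ τ : ℝ, 0 < τ → τ ≤ 1 →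
      C⁻¹ * τ ^ (-δ) ≤ ((S.Zpart τ).ncard : ℝ) ∧
      ((S.Zpart τ).ncard : ℝ) ≤ C * τ ^ (-δ) := by
  classical
  obtain ⟨K⟩ := SchAux.consts_ex S
  obtain ⟨m₀, hm₀, hm₀b⟩ := SchAux.base_pos K hδ0 μ hμ
  have hprob : IsProbabilityMeasure μ := hμ.1
  set A := min m₀ ((SchAux.c1 K * SchAux.eps K)^δ * m₀) with hA
  set B := max (((min K.ℓ 1))^δ)⁻¹ ((SchAux.c2 K)^δ) with hB
  have hApos : 0 < A := lt_min hm₀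
    (mul_pos (Real.rpow_pos_of_pos (mul_pos (SchAux.c1_pos K) (SchAux.eps_pos K)) δ) hm₀)
  have hBpos : 0 < B := lt_of_lt_of_le
    (inv_pos.2 (Real.rpow_pos_of_pos (lt_min K.hl one_pos) δ)) (le_max_left _ _)
  refine ⟨max B A⁻¹, lt_of_lt_of_le hBpos (le_max_left _ _), fun τ hτ0 hτ1 => ?_⟩
  have hfin := SchAux.Zpart_finite K (S := S) hτ0
  set Z := hfin.toFinset with hZ
  have hmem : ∀ m, m ∈ Z ↔ m ∈ S.Zpart τ := fun m => hfin.mem_toFinset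
  have hTpos : 0 < τ^δ := Real.rpow_pos_of_pos hτ0 δ
  have hsum : μ (⋃ m ∈ Z, S.wordI m) = ∑ m ∈ Z, μ (S.wordI m) :=
    measure_biUnion_finset
      (fun m hm m' hm' hne => SchAux.Zpart_disjoint ((hmem _).1 hm) ((hmem _).1 hm') hne)
      (fun m hm => SchAux.wordI_measurable m (SchAux.Zpart_isWord ((hmem _).1 hm))
        (SchAux.Zpart_ne_nil ((hmem _).1 hm)))
  have hcov : S.limitSet ⊆ ⋃ m ∈ Z, S.wordI m := by
    intro x hx
    obtain ⟨m, hmZ, hxm⟩ := Set.mem_iUnion₂.1 (SchAux.Zpart_cover K hτ0 hx)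
    exact Set.mem_biUnion ((hmem m).2 hmZ) hxm
  have hone : μ (⋃ m ∈ Z, S.wordI m) = 1 := by
    apply le_antisymm prob_le_one
    have hsub : Set.univ ⊆ (⋃ m ∈ Z, S.wordI m) ∪ S.limitSetᶜ := by
      intro x _
      by_cases hx : x ∈ S.limitSet
      · exact Or.inl (hcov hx)
      · exact Or.inr hx
    calc (1:ENNReal) = μ Set.univ := measure_univ.symm
      _ ≤ μ ((⋃ m ∈ Z, S.wordI m) ∪ S.limitSetᶜ) := measure_mono hsub
      _ ≤ μ (⋃ m ∈ Z, S.wordI m) + μ S.limitSetᶜ := measure_union_le _ _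
      _ = μ (⋃ m ∈ Z, S.wordI m) := by rw [hμ.2.1, add_zero]
  have hsum1 : ∑ m ∈ Z, (μ (S.wordI m)).toReal = 1 := by
    rw [← ENNReal.toReal_sum (fun m _ => measure_ne_top μ _), ← hsum, hone]
    rfl
  have hbounds := fun m (hm : m ∈ Z) =>
    SchAux.Zpart_measure_bounds K hδ0 μ hμ m₀ hm₀ hm₀b hτ0 hτ1 ((hmem m).1 hm)
  have hlow : (Z.card : ℝ) * (A * τ^δ) ≤ 1 := by
    rw [← hsum1]
    have h := Finset.card_nsmul_le_sum Z (fun m => (μ (S.wordI m)).toReal) (A * τ^δ)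
      (fun m hm => (hbounds m hm).1)
    rwa [nsmul_eq_mul] at h
  have hhigh : 1 ≤ (Z.card : ℝ) * (B * τ^δ) := by
    rw [← hsum1]
    have h := Finset.sum_le_card_nsmul Z (fun m => (μ (S.wordI m)).toReal) (B * τ^δ)
      (fun m hm => (hbounds m hm).2)
    rwa [nsmul_eq_mul] at h
  have hncard : (S.Zpart τ).ncard = Z.card := Set.ncard_eq_toFinset_card _ hfin
  rw [hncard, Real.rpow_neg hτ0.le]
  constructor
  · have h1 : (max B A⁻¹)⁻¹ ≤ B⁻¹ := inv_anti₀ hBpos (le_max_left _ _)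
    have h2 : B⁻¹ * (τ^δ)⁻¹ ≤ (Z.card : ℝ) := by
      rw [← mul_inv, ← one_div, div_le_iff₀ (mul_pos hBpos hTpos)]
      exact hhigh
    calc (max B A⁻¹)⁻¹ * (τ^δ)⁻¹ ≤ B⁻¹ * (τ^δ)⁻¹ :=
          mul_le_mul_of_nonneg_right h1 (by positivity)
      _ ≤ (Z.card : ℝ) := h2
  · have h1 : A⁻¹ ≤ max B A⁻¹ := le_max_right _ _
    have h2 : (Z.card : ℝ) ≤ A⁻¹ * (τ^δ)⁻¹ := by
      rw [← mul_inv, ← one_div, le_div_iff₀ (mul_pos hApos hTpos)]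
      exact hlow
    calc (Z.card : ℝ) ≤ A⁻¹ * (τ^δ)⁻¹ := h2
      _ ≤ (max B A⁻¹) * (τ^δ)⁻¹ := mul_le_mul_of_nonneg_right h1 (by positivity)

end
end

section
/- Let Z ⊂ W° be a partition. Then for every bounded Borel function f on 𝓘 := ⊔_{b ∈ A} I_b one has ∫_{Λ_Γ} f dμ = ∫_{Λ_Γ} 𝓛_Z f dμ, where the transfer operator 𝓛_Z is defined for x ∈ I_b by 𝓛_Z f(x) = Σ_{𝐚 ∈ Z, 𝐚 ⇝ b} f(γ_{𝐚'}(x)) w_{𝐚'}(x), with weight w_𝐜(x) := |γ'_𝐜(x)|_B^δ. -/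
open MeasureTheory Set Real Pointwise

noncomputable section

open MeasureTheory Set Real


def mden (g : SL2) (x : ℝ) : ℝ := g 1 0 * x + g 1 1

lemma det2 (g : SL2) : g 0 0 * g 1 1 - g 0 1 * g 1 0 = 1 := by
  have h := g.property
  rwa [Matrix.det_fin_two] at h

lemma mul_entry (g h : SL2) (i j : Fin 2) :
    (g * h) i j = g i 0 * h 0 j + g i 1 * h 1 j := by
  show ((g * h : SL2) : Matrix (Fin 2) (Fin 2) ℝ) i j = _
  rw [Matrix.SpecialLinearGroup.coe_mul, Matrix.mul_apply, Fin.sum_univ_two]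

lemma one_entry (i j : Fin 2) : (1 : SL2) i j = if i = j then 1 else 0 := by
  show ((1 : SL2) : Matrix (Fin 2) (Fin 2) ℝ) i j = _
  rw [Matrix.SpecialLinearGroup.coe_one, Matrix.one_apply]

lemma mden_one (x : ℝ) : mden 1 x = 1 := by simp [mden, one_entry]

lemma mobius_one (x : ℝ) : mobius 1 x = x := by simp [mobius, one_entry]

lemma mden_mul (g h : SL2) (x : ℝ) (hh : mden h x ≠ 0) :
    mden (g * h) x = mden g (mobius h x) * mden h x := by
  have hh' : h 1 0 * x + h 1 1 ≠ 0 := hh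
  simp only [mden, mobius, mul_entry]
  field_simp
  ring

lemma mobius_mul (g h : SL2) (x : ℝ) (hh : mden h x ≠ 0) :
    mobius (g * h) x = mobius g (mobius h x) := by
  have hh' : h 1 0 * x + h 1 1 ≠ 0 := hh
  have hnum : (g * h) 0 0 * x + (g * h) 0 1
      = (g 0 0 * mobius h x + g 0 1) * (h 1 0 * x + h 1 1) := by
    simp only [mobius, mul_entry]; field_simp; ring
  have hden : (g * h) 1 0 * x + (g * h) 1 1
      = (g 1 0 * mobius h x + g 1 1) * (h 1 0 * x + h 1 1) := by
    simp only [mobius, mul_entry]; field_simp; ring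
  rw [mobius, hnum, hden, mobius, mul_div_mul_right _ _ hh']
  rfl

lemma mobius_inj (g : SL2) {x y : ℝ} (hx : mden g x ≠ 0) (hy : mden g y ≠ 0)
    (hxy : mobius g x = mobius g y) : x = y := by
  have hd := det2 g
  have hx' : (g 1 0 * x + g 1 1 : ℝ) ≠ 0 := hx
  have hy' : (g 1 0 * y + g 1 1 : ℝ) ≠ 0 := hy
  rw [mobius, mobius, div_eq_div_iff hx' hy'] at hxy
  have h2 : (g 0 0 * g 1 1 - g 0 1 * g 1 0) * (x - y) = 0 := by linear_combination hxy
  rw [hd] at h2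
  linarith

lemma bar_bar {r : ℕ} (a : Fin (2 * r)) : bar (bar a) = a := by
  have h := a.isLt
  unfold bar
  apply Fin.ext
  split_ifs with h1 h2 h3
  · exact absurd (show (a : ℕ) + r < r from h2) (by omega)
  · show (a : ℕ) + r - r = a; omega
  · show (a : ℕ) - r + r = a; omega
  · exact absurd (show (a : ℕ) - r < r by omega) h3

namespace SchottkyData

variable {r : ℕ}

lemma schottky_basic (S : SchottkyData r) (a : Fin (2 * r)) {x : ℝ}
    (hx : x ∉ Ioo (S.ξ₀ (bar a)) (S.ξ₁ (bar a))) :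
    mden (S.γ a) x ≠ 0 ∧ mobius (S.γ a) x ∈ Icc (S.ξ₀ a) (S.ξ₁ a) := by
  have h := S.hmap a
  have hmem : (↑x : OnePoint ℝ) ∈ univ \ ((fun t : ℝ => (t : OnePoint ℝ)) ''
      Ioo (S.ξ₀ (bar a)) (S.ξ₁ (bar a))) := by
    refine ⟨mem_univ _, ?_⟩
    rintro ⟨t, ht, hte⟩
    rw [OnePoint.coe_eq_coe] at hte
    exact hx (hte ▸ ht)
  have h2 : mobiusOP (S.γ a) ↑x ∈ (fun t : ℝ => (t : OnePoint ℝ)) ''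
      Icc (S.ξ₀ a) (S.ξ₁ a) := by
    rw [← h]; exact mem_image_of_mem _ hmem
  obtain ⟨t, ht, hte⟩ := h2
  have hop : mobiusOP (S.γ a) ↑x = if S.γ a 1 0 * x + S.γ a 1 1 = 0 then OnePoint.infty
      else ((mobius (S.γ a) x : ℝ) : OnePoint ℝ) := rfl
  rw [hop] at hte
  by_cases hd : S.γ a 1 0 * x + S.γ a 1 1 = 0
  · rw [if_pos hd] at hte; exact absurd hte (OnePoint.coe_ne_infty t)
  · rw [if_neg hd, OnePoint.coe_eq_coe] at hte
    exact ⟨hd, hte.symm ▸ ht⟩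

lemma schottky_step (S : SchottkyData r) {a b : Fin (2 * r)} (hba : b ≠ bar a) {x : ℝ}
    (hx : x ∈ Icc (S.ξ₀ b) (S.ξ₁ b)) :
    mden (S.γ a) x ≠ 0 ∧ mobius (S.γ a) x ∈ Icc (S.ξ₀ a) (S.ξ₁ a) := by
  apply S.schottky_basic
  intro hIoo
  exact (S.hdisj b (bar a) hba).ne_of_mem hx (Ioo_subset_Icc_self hIoo) rfl

lemma wordγ_nil (S : SchottkyData r) : S.wordγ [] = 1 := rfl

lemma wordγ_cons (S : SchottkyData r) (a : Fin (2 * r)) (l : List (Fin (2 * r))) :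
    S.wordγ (a :: l) = S.γ a * S.wordγ l := by
  simp [wordγ]

lemma wordγ_append (S : SchottkyData r) (l m : List (Fin (2 * r))) :
    S.wordγ (l ++ m) = S.wordγ l * S.wordγ m := by
  simp [wordγ]

lemma wordγ_singleton (S : SchottkyData r) (a : Fin (2 * r)) : S.wordγ [a] = S.γ a := by
  simp [wordγ]

lemma key (S : SchottkyData r) : ∀ (l : List (Fin (2 * r))), S.IsWord l →
    ∀ (b : Fin (2 * r)) (x : ℝ), x ∈ Icc (S.ξ₀ b) (S.ξ₁ b) →
    (∀ h : l ≠ [], b ≠ bar (l.getLast h)) →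
    mden (S.wordγ l) x ≠ 0 ∧
      mobius (S.wordγ l) x ∈ Icc (S.ξ₀ (l.headD b)) (S.ξ₁ (l.headD b)) := by
  intro l
  induction l with
  | nil =>
    intro _ b x hx _
    refine ⟨?_, ?_⟩
    · rw [S.wordγ_nil, mden_one]; norm_num
    · rw [S.wordγ_nil, mobius_one]; exact hx
  | cons a m ih =>
    intro hw b x hx hlast
    cases m with
    | nil =>
      have hba : b ≠ bar a := hlast (by simp)
      have h := S.schottky_step hba hx
      rw [show S.wordγ [a] = S.γ a from S.wordγ_singleton a]
      exact h
    | cons c t =>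
      have hchain := List.isChain_cons_cons.mp hw
      have hcm : c ≠ bar a := hchain.1
      have hwm : S.IsWord (c :: t) := hchain.2
      have hlast' : ∀ h : (c :: t) ≠ [], b ≠ bar ((c :: t).getLast h) := by
        intro h
        have h2 := hlast (by simp)
        rwa [List.getLast_cons h] at h2
      obtain ⟨hd1, hy⟩ := ih hwm b x hx hlast'
      have hhd : ((c :: t).headD b) = c := rfl
      rw [hhd] at hy
      obtain ⟨hd2, hz⟩ := S.schottky_step hcm hy
      rw [S.wordγ_cons]
      refine ⟨?_, ?_⟩
      · rw [mden_mul _ _ _ hd1]; exact mul_ne_zero hd2 hd1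
      · rw [mobius_mul _ _ _ hd1]; exact hz

lemma isWord_dropLast_facts (S : SchottkyData r) {l : List (Fin (2 * r))}
    (hw : S.IsWord l) (h : l ≠ []) :
    S.IsWord l.dropLast ∧
      ∀ h2 : l.dropLast ≠ [], l.getLast h ≠ bar (l.dropLast.getLast h2) := by
  have hsplit : l.dropLast ++ [l.getLast h] = l := List.dropLast_append_getLast h
  have hw' : List.Chain' (fun p q => q ≠ bar p) (l.dropLast ++ [l.getLast h]) := by
    rw [hsplit]; exact hw
  unfold List.Chain' at hw'
  rw [List.isChain_append] at hw'
  obtain ⟨h1, _, h3⟩ := hw'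
  refine ⟨h1, fun h2 => ?_⟩
  exact h3 _ (by rw [List.getLast?_eq_getLast h2]; rfl) _ rfl

lemma headD_dropLast (l : List (Fin (2 * r))) (h : l ≠ []) :
    l.dropLast.headD (l.getLast h) = l.head h := by
  cases l with
  | nil => exact absurd rfl h
  | cons a m => cases m with
    | nil => rfl
    | cons c t => rfl

lemma wordI_subset_head (S : SchottkyData r) {l : List (Fin (2 * r))}
    (hw : S.IsWord l) (h : l ≠ []) :
    S.wordI l ⊆ Icc (S.ξ₀ (l.head h)) (S.ξ₁ (l.head h)) := by
  intro x hx
  rw [wordI, dif_neg h] at hx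
  obtain ⟨z, hz, rfl⟩ := hx
  obtain ⟨hwd, hlast⟩ := S.isWord_dropLast_facts hw h
  have hk := (S.key l.dropLast hwd (l.getLast h) z hz hlast).2
  rwa [headD_dropLast l h] at hk

lemma wordI_mden (S : SchottkyData r) {l : List (Fin (2 * r))}
    (hw : S.IsWord l) (h : l ≠ []) {z : ℝ}
    (hz : z ∈ Icc (S.ξ₀ (l.getLast h)) (S.ξ₁ (l.getLast h))) :
    mden (S.wordγ l.dropLast) z ≠ 0 := by
  obtain ⟨hwd, hlast⟩ := S.isWord_dropLast_facts hw h
  exact (S.key l.dropLast hwd (l.getLast h) z hz hlast).1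

lemma wordI_dropLast_subset (S : SchottkyData r) {l : List (Fin (2 * r))}
    (hw : S.IsWord l) (hlen : 2 ≤ l.length) :
    S.wordI l ⊆ S.wordI l.dropLast := by
  have h : l ≠ [] := by intro h0; rw [h0] at hlen; simp at hlen
  have h' : l.dropLast ≠ [] := by
    intro h0
    have := List.length_dropLast (xs := l)
    rw [h0] at this
    simp at this
    omega
  intro x hx
  rw [wordI, dif_neg h] at hx
  obtain ⟨z, hz, rfl⟩ := hx
  obtain ⟨hwd, hlast⟩ := S.isWord_dropLast_facts hw h
  set c := l.dropLast.getLast h' with hc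
  have hsplit : l.dropLast.dropLast ++ [c] = l.dropLast := List.dropLast_append_getLast h'
  have hbc : l.getLast h ≠ bar c := hlast h'
  obtain ⟨hd2, hz2⟩ := S.schottky_step hbc hz
  have hcomp : mobius (S.wordγ l.dropLast) z
      = mobius (S.wordγ l.dropLast.dropLast) (mobius (S.γ c) z) := by
    conv_lhs => rw [← hsplit]
    rw [S.wordγ_append, S.wordγ_singleton, ← mobius_mul _ _ _ (S.schottky_step hbc hz).1]
  rw [hcomp, wordI, dif_neg h']
  exact mem_image_of_mem _ hz2

lemma wordI_prefix (S : SchottkyData r) : ∀ (n : ℕ) (l m : List (Fin (2 * r))),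
    l.length ≤ n → S.IsWord l → m ≠ [] → m <+: l → S.wordI l ⊆ S.wordI m := by
  intro n
  induction n with
  | zero =>
    intro l m hl _ hm hp
    have hl0 : l = [] := List.length_eq_zero_iff.mp (le_antisymm hl (Nat.zero_le _))
    rw [hl0] at hp
    exact absurd (List.prefix_nil.mp hp) hm
  | succ n ih =>
    intro l m hl hw hm hp
    by_cases hml : m = l
    · rw [hml]
    · have hmlen : m.length < l.length := by
        have h1 := hp.length_le
        rcases lt_or_eq_of_le h1 with h2 | h2
        · exact h2
        · exact absurd (hp.eq_of_length h2) hml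
      have hmne : 1 ≤ m.length := List.length_pos_iff.mpr hm
      have hlen2 : 2 ≤ l.length := by omega
      have ht : m <+: l.dropLast := by
        obtain ⟨t, rfl⟩ := hp
        have ht0 : t ≠ [] := by intro h0; rw [h0, List.append_nil] at hml; exact hml rfl
        rw [List.dropLast_append]
        rw [if_neg (by simpa using ht0)]
        exact ⟨t.dropLast, rfl⟩
      refine (S.wordI_dropLast_subset hw hlen2).trans (ih l.dropLast m ?_ ?_ hm ht)
      · rw [List.length_dropLast]; omega
      · exact (S.isWord_dropLast_facts hw (by intro h0; rw [h0] at hlen2; simp at hlen2)).1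

lemma wordI_cons (S : SchottkyData r) {a : Fin (2 * r)} {v : List (Fin (2 * r))}
    (hw : S.IsWord (a :: v)) (hv : v ≠ []) :
    S.wordI (a :: v) = mobius (S.γ a) '' S.wordI v := by
  have hd : (a :: v).dropLast = a :: v.dropLast := by
    cases v with
    | nil => exact absurd rfl hv
    | cons c t => rfl
  have hg : (a :: v).getLast (by simp) = v.getLast hv := List.getLast_cons hv
  rw [wordI, dif_neg (by simp : (a :: v) ≠ []), wordI, dif_neg hv, hd]
  have hwv : S.IsWord v := hw.tail
  have hcongr : ∀ z ∈ Icc (S.ξ₀ ((a :: v).getLast (by simp)))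
      (S.ξ₁ ((a :: v).getLast (by simp))),
      mobius (S.wordγ (a :: v.dropLast)) z
        = mobius (S.γ a) (mobius (S.wordγ v.dropLast) z) := by
    intro z hz
    rw [hg] at hz
    rw [S.wordγ_cons, mobius_mul _ _ _ (S.wordI_mden hwv hv hz)]
  rw [Set.image_congr hcongr]
  rw [hg]
  exact (Set.image_image _ _ _).symm

lemma wordI_singleton (S : SchottkyData r) (c : Fin (2 * r)) :
    S.wordI [c] = Icc (S.ξ₀ c) (S.ξ₁ c) := by
  rw [wordI, dif_neg (by simp : ([c] : List (Fin (2 * r))) ≠ [])]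
  have h1 : mobius (S.wordγ ([c] : List (Fin (2 * r))).dropLast) = id := funext mobius_one
  rw [h1, image_id]
  rfl

lemma mem_limitSet_iff (S : SchottkyData r) (x : ℝ) :
    x ∈ S.limitSet ↔ ∀ n, ∃ l, S.IsWord l ∧ l.length = n + 1 ∧ x ∈ S.wordI l := by
  simp only [limitSet, mem_iInter, mem_iUnion]
  constructor
  · intro h n; obtain ⟨l, ⟨h1, h2⟩, h3⟩ := h n; exact ⟨l, h1, h2, h3⟩
  · intro h n; obtain ⟨l, h1, h2, h3⟩ := h n; exact ⟨l, ⟨h1, h2⟩, h3⟩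

lemma head_eq_of_mem (S : SchottkyData r) {l : List (Fin (2 * r))} (hw : S.IsWord l)
    (h : l ≠ []) {c : Fin (2 * r)} {x : ℝ} (hx : x ∈ S.wordI l)
    (hc : x ∈ Icc (S.ξ₀ c) (S.ξ₁ c)) : l.head h = c := by
  by_contra hne
  exact (S.hdisj _ _ hne).ne_of_mem (S.wordI_subset_head hw h hx) hc rfl

end SchottkyData

namespace SchottkyData
variable {r : ℕ}

lemma limitSet_step (S : SchottkyData r) {x : ℝ} (hx : x ∈ S.limitSet) (a : Fin (2 * r)) :
    mden (S.γ a) x ≠ 0 ∧ mobius (S.γ a) x ∈ S.limitSet := by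
  rw [mem_limitSet_iff] at hx
  obtain ⟨l0, hw0, hlen0, hx0⟩ := hx 0
  obtain ⟨c, rfl⟩ := List.length_eq_one_iff.mp hlen0
  rw [S.wordI_singleton] at hx0
  by_cases hca : c = bar a
  · -- x lies in the interval of `bar a`
    subst hca
    have main : ∀ n, ∃ z l, S.IsWord l ∧ l.length = n + 1 ∧ z ∈ S.wordI l ∧
        mden (S.γ a) x ≠ 0 ∧ mobius (S.γ a) x = z := by
      intro n
      obtain ⟨l, hw, hlen, hxl⟩ := hx (n + 1)
      have hne : l ≠ [] := by intro h0; rw [h0] at hlen; simp at hlen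
      cases l with
      | nil => exact absurd rfl hne
      | cons d v =>
        have hvne : v ≠ [] := by
          intro h0; rw [h0] at hlen; simp at hlen
        have hd : d = bar a := S.head_eq_of_mem hw hne hxl hx0
        subst hd
        rw [S.wordI_cons hw hvne] at hxl
        obtain ⟨z, hz, hze⟩ := hxl
        have hvw : S.IsWord v := hw.tail
        have hvh : v.head hvne ≠ bar (bar a) := by
          cases v with
          | nil => exact absurd rfl hvne
          | cons e t => exact (List.isChain_cons_cons.mp hw).1
        have hzc : z ∈ Icc (S.ξ₀ (v.head hvne)) (S.ξ₁ (v.head hvne)) :=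
          S.wordI_subset_head hvw hvne hz
        obtain ⟨hdz, _⟩ := S.schottky_step hvh hzc
        have hprod : S.γ a * S.γ (bar a) = 1 := by
          rw [S.hinv a, mul_inv_cancel]
        have hden1 : mden (S.γ a) (mobius (S.γ (bar a)) z) * mden (S.γ (bar a)) z = 1 := by
          rw [← mden_mul _ _ _ hdz, hprod, mden_one]
        have hval : mobius (S.γ a) (mobius (S.γ (bar a)) z) = z := by
          rw [← mobius_mul _ _ _ hdz, hprod, mobius_one]
        rw [← hze]
        exact ⟨z, v, hvw, by have := hlen; simp at this; omega, hz,
          left_ne_zero_of_mul_eq_one hden1, hval⟩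
    obtain ⟨z0, l0, _, _, _, hden, _⟩ := main 0
    refine ⟨hden, ?_⟩
    rw [mem_limitSet_iff]
    intro n
    obtain ⟨z, l, hw, hlen, hz, _, hval⟩ := main n
    exact ⟨l, hw, hlen, hval ▸ hz⟩
  · obtain ⟨hden, hval⟩ := S.schottky_step hca hx0
    refine ⟨hden, ?_⟩
    rw [mem_limitSet_iff]
    intro n
    obtain ⟨l, hw, hlen, hxl⟩ := hx n
    have hne : l ≠ [] := by intro h0; rw [h0] at hlen; simp at hlen
    have hhead : l.head hne = c := S.head_eq_of_mem hw hne hxl hx0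
    have hwa : S.IsWord (a :: l) := by
      cases l with
      | nil => exact absurd rfl hne
      | cons d v =>
        refine List.isChain_cons_cons.mpr ⟨?_, hw⟩
        have : d = c := hhead
        rw [this]
        exact hca
    have hmem : mobius (S.γ a) x ∈ S.wordI (a :: l) := by
      rw [S.wordI_cons hwa hne]
      exact mem_image_of_mem _ hxl
    refine ⟨(a :: l).take (n + 1), hwa.take _, ?_, ?_⟩
    · simp [hlen]
    · refine S.wordI_prefix (n + 2) (a :: l) _ (by simp [hlen]) hwa ?_
        (List.take_prefix _ _) hmem
      have : ((a :: l).take (n + 1)).length = n + 1 := by simp [hlen]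
      intro h0
      rw [h0] at this
      simp at this

lemma limitSet_word (S : SchottkyData r) : ∀ (m : List (Fin (2 * r))) {x : ℝ},
    x ∈ S.limitSet → mden (S.wordγ m) x ≠ 0 ∧ mobius (S.wordγ m) x ∈ S.limitSet := by
  intro m
  induction m with
  | nil =>
    intro x hx
    refine ⟨?_, ?_⟩
    · rw [S.wordγ_nil, mden_one]; norm_num
    · rw [S.wordγ_nil, mobius_one]; exact hx
  | cons a m ih =>
    intro x hx
    obtain ⟨h1, h2⟩ := ih hx
    obtain ⟨h3, h4⟩ := S.limitSet_step h2 a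
    rw [S.wordγ_cons]
    refine ⟨?_, ?_⟩
    · rw [mden_mul _ _ _ h1]; exact mul_ne_zero h3 h1
    · rw [mobius_mul _ _ _ h1]; exact h4

lemma wordI_concat (S : SchottkyData r) (p : List (Fin (2 * r))) (a : Fin (2 * r)) :
    S.wordI (p ++ [a]) = mobius (S.wordγ p) '' Icc (S.ξ₀ a) (S.ξ₁ a) := by
  rw [wordI, dif_neg (by simp : p ++ [a] ≠ [])]
  simp only [List.dropLast_concat, List.getLast_concat]

lemma concat_mden (S : SchottkyData r) {p : List (Fin (2 * r))} {a : Fin (2 * r)}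
    (hw : S.IsWord (p ++ [a])) {z : ℝ} (hz : z ∈ Icc (S.ξ₀ a) (S.ξ₁ a)) :
    mden (S.wordγ p) z ≠ 0 := by
  have h1 : (p ++ [a]) ≠ [] := by simp
  have h2 : (p ++ [a]).getLast h1 = a := List.getLast_concat
  have hz' : z ∈ Icc (S.ξ₀ ((p ++ [a]).getLast h1)) (S.ξ₁ ((p ++ [a]).getLast h1)) := by
    rw [h2]; exact hz
  have h3 := S.wordI_mden hw h1 hz'
  rwa [List.dropLast_concat] at h3

lemma exists_split {X : Type*} : ∀ (l m : List X), ¬ l <+: m → ¬ m <+: l →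
    ∃ p a b s t, a ≠ b ∧ l = p ++ a :: s ∧ m = p ++ b :: t := by
  intro l
  induction l with
  | nil => intro m h _; exact absurd (List.nil_prefix (l := m)) h
  | cons x l ih =>
    intro m h1 h2
    cases m with
    | nil => exact absurd (List.nil_prefix (l := x :: l)) h2
    | cons y t =>
      by_cases hxy : x = y
      · subst hxy
        have h1' : ¬ l <+: t := fun hp => h1 (List.cons_prefix_cons.mpr ⟨rfl, hp⟩)
        have h2' : ¬ t <+: l := fun hp => h2 (List.cons_prefix_cons.mpr ⟨rfl, hp⟩)
        obtain ⟨p, a, b, s, t', hab, hl, hm⟩ := ih t h1' h2'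
        exact ⟨x :: p, a, b, s, t', hab, by rw [List.cons_append, hl],
          by rw [List.cons_append, hm]⟩
      · exact ⟨[], x, y, l, t, hxy, rfl, rfl⟩

lemma wordI_disjoint (S : SchottkyData r) {l m : List (Fin (2 * r))}
    (hwl : S.IsWord l) (hwm : S.IsWord m)
    (h1 : ¬ l <+: m) (h2 : ¬ m <+: l) {x : ℝ}
    (hxl : x ∈ S.wordI l) (hxm : x ∈ S.wordI m) : False := by
  obtain ⟨p, a, b, s, t, hab, rfl, rfl⟩ := exists_split l m h1 h2
  have hpre1 : (p ++ [a]) <+: p ++ a :: s := ⟨s, by simp⟩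
  have hpre2 : (p ++ [b]) <+: p ++ b :: t := ⟨t, by simp⟩
  have hw1 : S.IsWord (p ++ [a]) := List.IsChain.prefix hwl hpre1
  have hw2 : S.IsWord (p ++ [b]) := List.IsChain.prefix hwm hpre2
  have hx1 : x ∈ S.wordI (p ++ [a]) :=
    S.wordI_prefix (p ++ a :: s).length _ _ le_rfl hwl (by simp) hpre1 hxl
  have hx2 : x ∈ S.wordI (p ++ [b]) :=
    S.wordI_prefix (p ++ b :: t).length _ _ le_rfl hwm (by simp) hpre2 hxm
  rw [S.wordI_concat] at hx1 hx2
  obtain ⟨z, hz, hze⟩ := hx1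
  obtain ⟨w, hwmem, hwe⟩ := hx2
  have hdz : mden (S.wordγ p) z ≠ 0 := S.concat_mden hw1 hz
  have hdw : mden (S.wordγ p) w ≠ 0 := S.concat_mden hw2 hwmem
  have : z = w := mobius_inj _ hdz hdw (by rw [hze, hwe])
  subst this
  exact (S.hdisj a b hab).ne_of_mem hz hwmem rfl

lemma word_extend (S : SchottkyData r) : ∀ (n : ℕ) (m : List (Fin (2 * r))), S.IsWord m →
    ∃ w, S.IsWord w ∧ m <+: w ∧ w.length = m.length + n := by
  have h2r : 1 < 2 * r := by have := S.hr; omega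
  intro n
  induction n with
  | zero => exact fun m hm => ⟨m, hm, List.prefix_refl m, rfl⟩
  | succ n ih =>
    intro m hm
    obtain ⟨w, hww, hpre, hlen⟩ := ih m hm
    by_cases hw0 : w = []
    · refine ⟨[⟨0, by omega⟩], List.isChain_singleton _, ?_, ?_⟩
      · rw [hw0] at hpre
        rw [List.prefix_nil.mp hpre]
        exact List.nil_prefix
      · rw [hw0] at hlen
        simp at hlen
        simp [List.length_singleton]
        omega
    · haveI : Nontrivial (Fin (2 * r)) := Fin.nontrivial_iff_two_le.mpr (by omega)
      obtain ⟨c, hc⟩ := exists_ne (bar (w.getLast hw0))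
      refine ⟨w ++ [c], ?_, hpre.trans ⟨[c], rfl⟩, by simp [hlen]; omega⟩
      unfold IsWord List.Chain'
      rw [List.isChain_append]
      refine ⟨hww, List.isChain_singleton _, ?_⟩
      intro p hp q hq
      rw [List.getLast?_eq_getLast hw0] at hp
      have hp' : p = w.getLast hw0 := by
        have h := hp; simp at h; exact h.symm
      have hq' : q = c := by
        have h := hq; simp at h; exact h.symm
      rw [hp', hq']
      exact hc

lemma wordγ_mem_closure (S : SchottkyData r) (l : List (Fin (2 * r))) :
    S.wordγ l ∈ Subgroup.closure (Set.range S.γ) := by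
  induction l with
  | nil => exact one_mem _
  | cons a m ih =>
    rw [S.wordγ_cons]
    exact mul_mem (Subgroup.subset_closure ⟨a, rfl⟩) ih

end SchottkyData

section Analysis

lemma mobius_measurable (g : SL2) : Measurable (mobius g) := by
  unfold mobius
  fun_prop

lemma mobiusDerivB_measurable (g : SL2) : Measurable (mobiusDerivB g) := by
  unfold mobiusDerivB mobiusDeriv mobius
  fun_prop

lemma weight_measurable (g : SL2) (δ : ℝ) (hδ : 0 ≤ δ) :
    Measurable (fun x => mobiusDerivB g x ^ δ) :=
  (Real.continuous_rpow_const hδ).measurable.comp (mobiusDerivB_measurable g)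

lemma mobius_continuousOn (g : SL2) {s : Set ℝ} (h : ∀ x ∈ s, mden g x ≠ 0) :
    ContinuousOn (mobius g) s := by
  apply ContinuousOn.div
  · fun_prop
  · fun_prop
  · exact h

lemma weight_continuousOn (g : SL2) (δ : ℝ) (hδ : 0 ≤ δ) {s : Set ℝ}
    (h : ∀ x ∈ s, mden g x ≠ 0) :
    ContinuousOn (fun x => mobiusDerivB g x ^ δ) s := by
  apply ContinuousOn.rpow_const _ (fun x _ => Or.inr hδ)
  unfold mobiusDerivB mobiusDeriv
  apply ContinuousOn.mul
  · apply ContinuousOn.div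
    · fun_prop
    · exact continuousOn_const.add ((mobius_continuousOn g h).pow 2)
    · intro x _
      positivity
  · apply ContinuousOn.inv₀
    · fun_prop
    · intro x hx
      exact pow_ne_zero 2 (h x hx)

end Analysis

/-- **Invariance of the Patterson–Sullivan measure under the transfer operator:** if
`Z ⊂ W°` is a partition (every sufficiently long word has a unique prefix in `Z`), then for
every bounded Borel `f` one has `∫_{Λ_Γ} f dμ = ∫_{Λ_Γ} 𝓛_Z f dμ`, where for `x ∈ I_b`,
`𝓛_Z f(x) = Σ_{𝐚 ∈ Z, 𝐚 ⇝ b} f(γ_{𝐚'}(x)) w_{𝐚'}(x)` with `w_𝐜(x) = |γ'_𝐜(x)|_B^δ`. -/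
theorem transfer_operator_invariance (r : ℕ) (S : SchottkyData r) (δ : ℝ)
    (hδ0 : 0 < δ) (hδ1 : δ < 1) (μ : Measure ℝ) (hμ : S.IsPS δ μ)
    (Z : Finset (List (Fin (2 * r))))
    (hZw : ∀ l ∈ Z, S.IsWord l ∧ l ≠ [])
    (hZpart : ∃ N : ℕ, ∀ l : List (Fin (2 * r)), S.IsWord l → N ≤ l.length →
      ∃! m, m ∈ Z ∧ m <+: l)
    (f : ℝ → ℝ) (hf : Measurable f) (hfb : ∃ C, ∀ x, |f x| ≤ C) :
    ∫ x in S.limitSet, f x ∂μ =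
      ∫ x in S.limitSet, (∑ l ∈ Z, (l.getLast?).elim 0 fun b =>
        Set.indicator (Icc (S.ξ₀ b) (S.ξ₁ b))
          (fun y => f (mobius (S.wordγ l.dropLast) y) *
            mobiusDerivB (S.wordγ l.dropLast) y ^ δ) x) ∂μ := by
  classical
  obtain ⟨hprob, hnull, hconf⟩ := hμ
  obtain ⟨N, hN⟩ := hZpart
  haveI := hprob
  obtain ⟨C, hC⟩ := hfb
  have hC0 : 0 ≤ C := le_trans (abs_nonneg _) (hC 0)
  have hae : ∀ᵐ x ∂μ, x ∈ S.limitSet := by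
    rw [MeasureTheory.ae_iff]
    exact hnull
  have hres : μ.restrict S.limitSet = μ := Measure.restrict_eq_self_of_ae_mem hae
  rw [hres]
  -- incomparability of distinct elements of Z
  have hinc : ∀ l ∈ Z, ∀ m ∈ Z, l ≠ m → ¬ l <+: m := by
    intro l hl m hm hlm hpre
    obtain ⟨w, hww, hmw, hwlen⟩ := S.word_extend N m (hZw m hm).1
    obtain ⟨u, _, huniq⟩ := hN w hww (by omega)
    exact hlm ((huniq l ⟨hl, hpre.trans hmw⟩).trans (huniq m ⟨hm, hmw⟩).symm)
  -- unique covering of the limit set by the intervals of Z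
  have hcover : ∀ x ∈ S.limitSet, ∃ l ∈ Z, x ∈ S.wordI l ∧
      ∀ m ∈ Z, x ∈ S.wordI m → m = l := by
    intro x hx
    obtain ⟨w, hww, hwlen, hxw⟩ := (S.mem_limitSet_iff x).mp hx N
    obtain ⟨m, ⟨hmZ, hmpre⟩, _⟩ := hN w hww (by omega)
    have hxm : x ∈ S.wordI m :=
      S.wordI_prefix w.length w m le_rfl hww (hZw m hmZ).2 hmpre hxw
    refine ⟨m, hmZ, hxm, ?_⟩
    intro m' hm' hxm'
    by_contra hne
    exact S.wordI_disjoint (hZw m' hm').1 (hZw m hmZ).1 (hinc m' hm' m hmZ hne)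
      (hinc m hmZ m' hm' (Ne.symm hne)) hxm' hxm
  -- per-element facts
  have hperl : ∀ l ∈ Z, Integrable (Set.indicator (S.wordI l) f) μ ∧
      Integrable (fun x => Option.elim l.getLast? 0 fun b =>
        Set.indicator (Icc (S.ξ₀ b) (S.ξ₁ b))
          (fun y => f (mobius (S.wordγ l.dropLast) y) *
            mobiusDerivB (S.wordγ l.dropLast) y ^ δ) x) μ ∧
      ∫ x, Set.indicator (S.wordI l) f x ∂μ
        = ∫ x, Option.elim l.getLast? 0 (fun b =>
            Set.indicator (Icc (S.ξ₀ b) (S.ξ₁ b))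
              (fun y => f (mobius (S.wordγ l.dropLast) y) *
                mobiusDerivB (S.wordγ l.dropLast) y ^ δ) x) ∂μ := by
    intro l hlZ
    obtain ⟨hw, hne⟩ := hZw l hlZ
    have hsplit : l.dropLast ++ [l.getLast hne] = l := List.dropLast_append_getLast hne
    have hwI : S.wordI l = mobius (S.wordγ l.dropLast) ''
        Icc (S.ξ₀ (l.getLast hne)) (S.ξ₁ (l.getLast hne)) := by
      conv_lhs => rw [← hsplit]
      rw [S.wordI_concat]
    have hwcon : S.IsWord (l.dropLast ++ [l.getLast hne]) := by rw [hsplit]; exact hw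
    have hmden : ∀ z ∈ Icc (S.ξ₀ (l.getLast hne)) (S.ξ₁ (l.getLast hne)),
        mden (S.wordγ l.dropLast) z ≠ 0 := fun z hz => S.concat_mden hwcon hz
    have hTeq : (fun x => Option.elim l.getLast? 0 fun b =>
        Set.indicator (Icc (S.ξ₀ b) (S.ξ₁ b))
          (fun y => f (mobius (S.wordγ l.dropLast) y) *
            mobiusDerivB (S.wordγ l.dropLast) y ^ δ) x)
        = Set.indicator (Icc (S.ξ₀ (l.getLast hne)) (S.ξ₁ (l.getLast hne)))
          (fun y => f (mobius (S.wordγ l.dropLast) y) *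
            mobiusDerivB (S.wordγ l.dropLast) y ^ δ) := by
      funext x
      rw [List.getLast?_eq_getLast hne]
      rfl
    have hcont : ContinuousOn (mobius (S.wordγ l.dropLast))
        (Icc (S.ξ₀ (l.getLast hne)) (S.ξ₁ (l.getLast hne))) :=
      mobius_continuousOn _ hmden
    have hcomp : IsCompact (S.wordI l) := by
      rw [hwI]; exact isCompact_Icc.image_of_continuousOn hcont
    have hmeasI : MeasurableSet (S.wordI l) := hcomp.isClosed.measurableSet
    have hFmeas : Measurable (Set.indicator (S.wordI l) f) := hf.indicator hmeasI
    have hFbd : ∀ x, |Set.indicator (S.wordI l) f x| ≤ C := by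
      intro x
      by_cases hx : x ∈ S.wordI l
      · rw [Set.indicator_of_mem hx]; exact hC x
      · rw [Set.indicator_of_notMem hx]; simpa using hC0
    have hFint : Integrable (Set.indicator (S.wordI l) f) μ :=
      Integrable.mono' (integrable_const C) hFmeas.aestronglyMeasurable
        (Filter.Eventually.of_forall fun x => by
          simpa [Real.norm_eq_abs] using hFbd x)
    obtain ⟨Cw, hCw⟩ := (isCompact_Icc
      (a := S.ξ₀ (l.getLast hne)) (b := S.ξ₁ (l.getLast hne))).exists_bound_of_continuousOn
      (weight_continuousOn _ δ hδ0.le hmden)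
    have hCw0 : 0 ≤ Cw := le_trans (norm_nonneg _)
      (hCw (S.ξ₀ (l.getLast hne)) (left_mem_Icc.mpr (S.hlt _).le))
    have hTmeas : Measurable (Set.indicator
        (Icc (S.ξ₀ (l.getLast hne)) (S.ξ₁ (l.getLast hne)))
        (fun y => f (mobius (S.wordγ l.dropLast) y) *
          mobiusDerivB (S.wordγ l.dropLast) y ^ δ)) :=
      ((hf.comp (mobius_measurable _)).mul
        (weight_measurable _ δ hδ0.le)).indicator measurableSet_Icc
    have hTbd : ∀ x, |Set.indicator
        (Icc (S.ξ₀ (l.getLast hne)) (S.ξ₁ (l.getLast hne)))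
        (fun y => f (mobius (S.wordγ l.dropLast) y) *
          mobiusDerivB (S.wordγ l.dropLast) y ^ δ) x| ≤ C * Cw := by
      intro x
      by_cases hx : x ∈ Icc (S.ξ₀ (l.getLast hne)) (S.ξ₁ (l.getLast hne))
      · rw [Set.indicator_of_mem hx, abs_mul]
        refine mul_le_mul (hC _) ?_ (abs_nonneg _) hC0
        simpa [Real.norm_eq_abs] using hCw x hx
      · rw [Set.indicator_of_notMem hx]
        simpa using mul_nonneg hC0 hCw0
    have hTint : Integrable (Set.indicator
        (Icc (S.ξ₀ (l.getLast hne)) (S.ξ₁ (l.getLast hne)))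
        (fun y => f (mobius (S.wordγ l.dropLast) y) *
          mobiusDerivB (S.wordγ l.dropLast) y ^ δ)) μ :=
      Integrable.mono' (integrable_const (C * Cw)) hTmeas.aestronglyMeasurable
        (Filter.Eventually.of_forall fun x => by
          simpa [Real.norm_eq_abs] using hTbd x)
    have hid := hconf (S.wordγ l.dropLast) (S.wordγ_mem_closure l.dropLast)
      (Set.indicator (S.wordI l) f) hFmeas ⟨C, hFbd⟩
    have hae2 : (fun x => Set.indicator (S.wordI l) f (mobius (S.wordγ l.dropLast) x) *
        mobiusDerivB (S.wordγ l.dropLast) x ^ δ)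
        =ᵐ[μ] Set.indicator (Icc (S.ξ₀ (l.getLast hne)) (S.ξ₁ (l.getLast hne)))
          (fun y => f (mobius (S.wordγ l.dropLast) y) *
            mobiusDerivB (S.wordγ l.dropLast) y ^ δ) := by
      filter_upwards [hae] with x hx
      by_cases hxb : x ∈ Icc (S.ξ₀ (l.getLast hne)) (S.ξ₁ (l.getLast hne))
      · rw [Set.indicator_of_mem hxb,
          Set.indicator_of_mem (by rw [hwI]; exact mem_image_of_mem _ hxb)]
      · rw [Set.indicator_of_notMem hxb, Set.indicator_of_notMem ?_, zero_mul]
        intro hmem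
        rw [hwI] at hmem
        obtain ⟨z, hz, hze⟩ := hmem
        have hdx : mden (S.wordγ l.dropLast) x ≠ 0 := (S.limitSet_word l.dropLast hx).1
        have hzx := mobius_inj _ (hmden z hz) hdx hze
        exact hxb (hzx ▸ hz)
    rw [hTeq]
    exact ⟨hFint, hTint, hid.trans (integral_congr_ae hae2)⟩
  have hLHS : ∫ x, f x ∂μ = ∑ l ∈ Z, ∫ x, Set.indicator (S.wordI l) f x ∂μ := by
    rw [← integral_finset_sum Z (fun l hl => (hperl l hl).1)]
    apply integral_congr_ae
    filter_upwards [hae] with x hx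
    obtain ⟨l₀, hl₀, hxl₀, huniq⟩ := hcover x hx
    rw [Finset.sum_eq_single_of_mem l₀ hl₀
      (fun m hm hml₀ => Set.indicator_of_notMem (fun hxm => hml₀ (huniq m hm hxm)) f),
      Set.indicator_of_mem hxl₀]
  rw [hLHS, integral_finset_sum Z (fun l hl => (hperl l hl).2.1)]
  exact Finset.sum_congr rfl (fun l hl => (hperl l hl).2.2)


end
end
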